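/- arXiv:1905.07568 — 15 statements merged into one kernel-verified Lean document; each statement's English description precedes it below -/
import Mathlib

section
/- Let z₁,…,zₙ be complex numbers with arithmetic mean z̃, and suppose there is a real number r ≥ 0 such that |zᵢ − z̃| = r for every i = 1,…,n. Then the closed disk of radius r centered at z̃ is the smallest closed disk containing all the points zᵢ; precisely, for every complex number c there exists an index i with |zᵢ − c| ≥ r. -/
/-- If all the complex numbers `z i` lie at distance `r` from their arithmetic
mean `zt`, then the closed disk of radius `r` centered at `zt` is the smallest
closed disk containing all of them: every complex number `c` has some `z i`
at distance at least `r` from it. -/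
theorem stmt_0 (n : ℕ) (hn : 1 ≤ n) (z : Fin n → ℂ) (zt : ℂ)
    (hzt : zt = (∑ i, z i) / n) (r : ℝ) (hr : 0 ≤ r)
    (hcirc : ∀ i, ‖z i - zt‖ = r) :
    ∀ c : ℂ, ∃ i, r ≤ ‖z i - c‖ := by
  intro c
  by_contra h
  push_neg at h
  have hne : (n : ℂ) ≠ 0 := by
    exact_mod_cast Nat.cast_ne_zero.mpr (by omega)
  have hsum0 : ∑ i, (z i - zt) = 0 := by
    rw [Finset.sum_sub_distrib, Finset.sum_const, Finset.card_univ, Fintype.card_fin, hzt, nsmul_eq_mul]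
    field_simp
    simp
  have key : ∑ i, Complex.normSq (z i - c)
      = ∑ i, Complex.normSq (z i - zt) + n * Complex.normSq (zt - c) := by
    have : ∀ i, Complex.normSq (z i - c)
        = Complex.normSq (z i - zt) + Complex.normSq (zt - c)
          + 2 * ((z i - zt) * (starRingEnd ℂ) (zt - c)).re := by
      intro i
      have : z i - c = (z i - zt) + (zt - c) := by ring
      rw [this, Complex.normSq_add]
    rw [Finset.sum_congr rfl fun i _ => this i]
    rw [Finset.sum_add_distrib, Finset.sum_add_distrib, Finset.sum_const,
      Finset.card_univ, Fintype.card_fin]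
    have hcross : ∑ x : Fin n, 2 * ((z x - zt) * (starRingEnd ℂ) (zt - c)).re = 0 := by
      rw [← Finset.mul_sum, ← Complex.re_sum, ← Finset.sum_mul, hsum0]
      simp
    rw [hcross]
    simp [nsmul_eq_mul]
  have hlt : ∑ i, Complex.normSq (z i - c) < ∑ _ : Fin n, (r : ℝ) ^ 2 := by
    have : Nonempty (Fin n) := ⟨⟨0, by omega⟩⟩
    apply Finset.sum_lt_sum_of_nonempty Finset.univ_nonempty
    intro i _
    have h1 := h i
    have := Complex.sq_norm (z i - c)
    nlinarith [norm_nonneg (z i - c)]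
  have heq : ∀ i, Complex.normSq (z i - zt) = r ^ 2 := by
    intro i
    rw [← Complex.sq_norm, hcirc]
  rw [key] at hlt
  simp only [heq, Finset.sum_const, Finset.card_univ, Fintype.card_fin, nsmul_eq_mul] at hlt
  nlinarith [Complex.normSq_nonneg (zt - c), (by omega : 1 ≤ n), (by exact_mod_cast hn : (1:ℝ) ≤ n)]
end

section
/- Let z₁,…,zₙ (n ≥ 1) be complex numbers. Then S_z = |S| = σ_z (equivalently, |∑_{i=1}^n (zᵢ − z̃)²| = ∑_{i=1}^n |zᵢ − z̃|²) if and only if all the points z₁,…,zₙ lie on a common straight line in the complex plane, i.e., there exist complex numbers w and d and real numbers t₁,…,tₙ such that zᵢ = w + tᵢ·d for all i. -/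
open Finset

/-- `S_z = |S| = σ_z`, equivalently `|∑ (zᵢ - z̃)²| = ∑ |zᵢ - z̃|²`, holds if and
only if the points `z₁, …, zₙ` are collinear in the complex plane. -/
theorem stmt_1 (n : ℕ) (hn : 1 ≤ n) (z : Fin n → ℂ) (zt : ℂ)
    (hzt : zt = (∑ i, z i) / n) :
    ‖∑ i, (z i - zt) ^ 2‖ = ∑ i, ‖z i - zt‖ ^ 2 ↔
      ∃ (w d : ℂ) (t : Fin n → ℝ), ∀ i, z i = w + (t i : ℂ) * d := by
  have hn0 : (n : ℂ) ≠ 0 := Nat.cast_ne_zero.mpr (by omega)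
  constructor
  · intro hab
    set S : ℂ := ∑ i, (z i - zt) ^ 2 with hS
    by_cases h0 : S = 0
    · refine ⟨zt, 0, fun _ => 0, fun i => ?_⟩
      have hsum0 : ∑ i, ‖z i - zt‖ ^ 2 = 0 := by
        rw [← hab, h0, norm_zero]
      have h1 := (Finset.sum_eq_zero_iff_of_nonneg
        (fun i _ => sq_nonneg ‖z i - zt‖)).mp hsum0 i (mem_univ i)
      have h2 : ‖z i - zt‖ = 0 := by
        nlinarith [norm_nonneg (z i - zt)]
      have := sub_eq_zero.mp (norm_eq_zero.mp h2)
      simp [this]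
    · have habs0 : (‖S‖ : ℝ) ≠ 0 := by simpa using h0
      obtain ⟨u, hu⟩ := IsAlgClosed.exists_pow_nat_eq (k := ℂ)
        (S / (‖S‖ : ℂ)) (n := 2) (by norm_num)
      have hu0 : u ≠ 0 := by
        intro h
        rw [h, zero_pow (by norm_num)] at hu
        rcases div_eq_zero_iff.mp hu.symm with h' | h'
        · exact h0 h'
        · exact habs0 (by exact_mod_cast h')
      have huabs : ‖u‖ = 1 := by
        have : ‖u‖ ^ 2 = 1 := by
          rw [← norm_pow, hu, norm_div]
          simp [Complex.norm_real, abs_of_nonneg (norm_nonneg S)]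
          exact h0
        nlinarith [norm_nonneg u]
      set v : Fin n → ℂ := fun i => (z i - zt) / u with hv
      have hvsum : ∑ i, (v i) ^ 2 = (‖S‖ : ℂ) := by
        simp only [hv, div_pow, ← Finset.sum_div, ← hS, hu]
        rw [div_div_eq_mul_div, div_eq_iff h0 |>.mpr]
        ring
      have hvabs : ∑ i, ‖v i‖ ^ 2 = ‖S‖ := by
        simp only [hv, norm_div, huabs, div_one]
        exact hab.symm
      -- real parts
      have him : ∀ i, (v i).im = 0 := by
        have h1 : ∑ i, ((v i).re ^ 2 - (v i).im ^ 2) = ‖S‖ := by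
          have := congrArg Complex.re hvsum
          simpa [Complex.re_sum, Complex.sq_norm, pow_two, Complex.mul_re] using this
        have h2 : ∑ i, ((v i).re ^ 2 + (v i).im ^ 2) = ‖S‖ := by
          rw [← hvabs]
          refine Finset.sum_congr rfl fun i _ => ?_
          rw [Complex.sq_norm, Complex.normSq_apply]; ring
        have h3 : ∑ i, (v i).im ^ 2 = 0 := by
          have := Finset.sum_sub_distrib (f := fun i => (v i).re ^ 2 + (v i).im ^ 2)
            (g := fun i => (v i).re ^ 2 - (v i).im ^ 2) (s := Finset.univ)
          have h4 : ∑ i, (((v i).re ^ 2 + (v i).im ^ 2) - ((v i).re ^ 2 - (v i).im ^ 2)) = 0 := by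
            rw [Finset.sum_sub_distrib, h1, h2, sub_self]
          have h5 : ∑ i, (2 * (v i).im ^ 2) = 0 := by
            rw [← h4]; exact Finset.sum_congr rfl fun i _ => by ring
          rw [← Finset.mul_sum] at h5
          linarith
        intro i
        have := (Finset.sum_eq_zero_iff_of_nonneg
          (fun i _ => sq_nonneg ((v i).im))).mp h3 i (mem_univ i)
        exact pow_eq_zero_iff (by norm_num) |>.mp this
      refine ⟨zt, u, fun i => (v i).re, fun i => ?_⟩
      have : ((v i).re : ℂ) = v i := Complex.ext rfl (by simp [him i])
      rw [this, hv]
      field_simp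
      ring
  · rintro ⟨w, d, t, ht⟩
    set s : ℝ := (∑ i, t i) / n with hs
    have hzt' : zt = w + (s : ℂ) * d := by
      rw [hzt]
      simp only [ht]
      rw [Finset.sum_add_distrib, Finset.sum_const, card_univ, Fintype.card_fin]
      push_cast [hs]
      field_simp
      rw [← Finset.sum_mul]
      ring
    have hzi : ∀ i, z i - zt = ((t i - s : ℝ) : ℂ) * d := by
      intro i; rw [ht i, hzt']; push_cast; ring
    have hLHS : ∑ i, (z i - zt) ^ 2 = ((∑ i, (t i - s) ^ 2 : ℝ) : ℂ) * d ^ 2 := by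
      push_cast
      rw [Finset.sum_mul]
      exact Finset.sum_congr rfl fun i _ => by rw [hzi i]; push_cast; ring
    rw [hLHS, norm_mul, norm_pow, Complex.norm_real, Real.norm_eq_abs,
      abs_of_nonneg (Finset.sum_nonneg fun i _ => sq_nonneg _)]
    rw [Finset.sum_mul]
    refine Finset.sum_congr rfl fun i _ => ?_
    rw [hzi i, norm_mul, Complex.norm_real, Real.norm_eq_abs, mul_pow, sq_abs]
end

section
/- Let z₁,…,zₙ be complex numbers and let T be a nonempty subset of {1,…,n} with |T| = r (1 ≤ r ≤ n). If γ_r = (1/r)∑_{i∈T} zᵢ is the arithmetic mean of the numbers indexed by T, then |γ_r − z̃|² ≤ ((n−r)/r)·σ_z². -/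
open Finset

/-- Real Mallows–Richter core: if the full sum vanishes, then
`n * (∑_T a)² ≤ r * (n - r) * ∑ a²`. -/
lemma real_mr_aux (n : ℕ) (a : Fin n → ℝ) (h : ∑ i, a i = 0) (T : Finset (Fin n)) :
    (n : ℝ) * (∑ i ∈ T, a i) ^ 2 ≤
      (T.card : ℝ) * ((n : ℝ) - T.card) * ∑ i, a i ^ 2 := by
  set A := ∑ i ∈ T, a i with hA
  set B := ∑ i ∈ Tᶜ, a i with hB
  have hsplit : A + B = 0 := by
    rw [hA, hB, Finset.sum_add_sum_compl]; exact h
  have hBA : B = -A := by linarith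
  have hP : A ^ 2 ≤ (T.card : ℝ) * ∑ i ∈ T, a i ^ 2 :=
    sq_sum_le_card_mul_sum_sq
  have hQ : A ^ 2 ≤ (Tᶜ.card : ℝ) * ∑ i ∈ Tᶜ, a i ^ 2 := by
    have := sq_sum_le_card_mul_sum_sq (s := Tᶜ) (f := a)
    rw [← hB] at this
    rwa [hBA, neg_sq] at this
  have hcard : (T.card : ℝ) + (Tᶜ.card : ℝ) = n := by
    rw [← Nat.cast_add, Finset.card_add_card_compl]
    simp
  have hsum : (∑ i ∈ T, a i ^ 2) + (∑ i ∈ Tᶜ, a i ^ 2) = ∑ i, a i ^ 2 :=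
    Finset.sum_add_sum_compl T _
  have hc : ((n : ℝ) - T.card) = (Tᶜ.card : ℝ) := by linarith
  rw [hc, ← hcard, ← hsum]
  have h1 : (Tᶜ.card : ℝ) * A ^ 2 ≤ (Tᶜ.card : ℝ) * ((T.card : ℝ) * ∑ i ∈ T, a i ^ 2) :=
    mul_le_mul_of_nonneg_left hP (by positivity)
  have h2 : (T.card : ℝ) * A ^ 2 ≤ (T.card : ℝ) * ((Tᶜ.card : ℝ) * ∑ i ∈ Tᶜ, a i ^ 2) :=
    mul_le_mul_of_nonneg_left hQ (by positivity)
  nlinarith [h1, h2]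

/-- The square of the real part in terms of the square and the modulus. -/
lemma re_sq_aux (c : ℂ) : c.re ^ 2 = ((c ^ 2).re + ‖c‖ ^ 2) / 2 := by
  have h1 : (c ^ 2).re = c.re ^ 2 - c.im ^ 2 := by
    rw [pow_two, Complex.mul_re]; ring
  have h2 : ‖c‖ ^ 2 = c.re ^ 2 + c.im ^ 2 := by
    rw [Complex.sq_norm, Complex.normSq_apply]; ring
  rw [h1, h2]; ring

/-- Complex analogue of the Mallows–Richter inequality: if `γ` is the mean of a
subfamily of `r` of the `n` numbers, then `|γ - z̃|² ≤ ((n-r)/r)·σ_z²`. -/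
theorem stmt_3 (n : ℕ) (hn : 1 ≤ n) (z : Fin n → ℂ) (zt : ℂ)
    (hzt : zt = (∑ i, z i) / n)
    (σ2 : ℝ)
    (hσ2 : σ2 = (‖(∑ i, (z i - zt) ^ 2) / n‖
        + (∑ i, ‖z i - zt‖ ^ 2) / n) / 2)
    (T : Finset (Fin n)) (r : ℕ) (hr : 1 ≤ r) (hT : T.card = r)
    (γ : ℂ) (hγ : γ = (∑ i ∈ T, z i) / r) :
    ‖γ - zt‖ ^ 2 ≤ (((n : ℝ) - r) / r) * σ2 := by
  have hn0 : (0:ℝ) < n := by positivity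
  have hr0 : (0:ℝ) < r := by positivity
  have hnC : (n : ℂ) ≠ 0 := Nat.cast_ne_zero.mpr (by omega)
  have hrC : (r : ℂ) ≠ 0 := Nat.cast_ne_zero.mpr (by omega)
  have hrn : r ≤ n := hT ▸ (T.card_le_univ.trans_eq (by simp))
  have hrnR : (r:ℝ) ≤ n := Nat.cast_le.mpr hrn
  have hwsum : ∑ i, (z i - zt) = 0 := by
    rw [Finset.sum_sub_distrib, Finset.sum_const, Finset.card_univ, Fintype.card_fin,
      nsmul_eq_mul, hzt]
    field_simp
    ring
  have hσnn : 0 ≤ σ2 := by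
    rw [hσ2]
    positivity
  set A : ℂ := ∑ i ∈ T, (z i - zt) with hA
  have hγA : γ - zt = A / r := by
    rw [hγ, hA, Finset.sum_sub_distrib, Finset.sum_const, hT, nsmul_eq_mul]
    field_simp
  by_cases hA0 : A = 0
  · rw [hγA, hA0]
    simp only [zero_div, map_zero, norm_zero]
    have h9 : (0:ℝ) ≤ ((n : ℝ) - r) / r := by
      apply div_nonneg _ (le_of_lt hr0); linarith
    have : (0:ℝ)^2 = 0 := by norm_num
    rw [this]
    exact mul_nonneg h9 hσnn
  · have hAabs : (0:ℝ) < ‖A‖ := by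
      simpa [AbsoluteValue.pos_iff] using hA0
    set u : ℂ := (starRingEnd ℂ) A / (‖A‖ : ℝ) with hu
    have huabs : ‖u‖ = 1 := by
      rw [hu, norm_div]
      simp [hAabs.ne']
    set a : Fin n → ℝ := fun i => (u * (z i - zt)).re with ha
    have hasum : ∑ i, a i = 0 := by
      simp only [ha]
      rw [← Complex.re_sum, ← Finset.mul_sum, hwsum, mul_zero, Complex.zero_re]
    have haT : ∑ i ∈ T, a i = ‖A‖ := by
      simp only [ha]
      rw [← Complex.re_sum, ← Finset.mul_sum, ← hA, hu, div_mul_eq_mul_div]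
      rw [mul_comm ((starRingEnd ℂ) A) A, Complex.mul_conj]
      rw [← Complex.ofReal_div, Complex.ofReal_re]
      rw [Complex.normSq_eq_norm_sq]
      field_simp
    have hsq : ∀ i, a i ^ 2
        = ((u ^ 2 * (z i - zt) ^ 2).re + ‖z i - zt‖ ^ 2) / 2 := by
      intro i
      have h := re_sq_aux (u * (z i - zt))
      simp only [ha]
      rw [h, mul_pow, norm_mul, huabs, one_mul]
    have hsum2 : ∑ i, a i ^ 2 = ((u ^ 2 * ∑ i, (z i - zt) ^ 2).re
        + ∑ i, ‖z i - zt‖ ^ 2) / 2 := by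
      calc ∑ i, a i ^ 2
          = ∑ i, ((u ^ 2 * (z i - zt) ^ 2).re + ‖z i - zt‖ ^ 2) / 2 :=
            Finset.sum_congr rfl fun i _ => hsq i
        _ = ((u ^ 2 * ∑ i, (z i - zt) ^ 2).re + ∑ i, ‖z i - zt‖ ^ 2) / 2 := by
            rw [← Finset.sum_div, Finset.sum_add_distrib, ← Complex.re_sum,
              ← Finset.mul_sum]
    have hre_le : (u ^ 2 * ∑ i, (z i - zt) ^ 2).re
        ≤ ‖∑ i, (z i - zt) ^ 2‖ := by
      calc (u ^ 2 * ∑ i, (z i - zt) ^ 2).re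
          ≤ ‖u ^ 2 * ∑ i, (z i - zt) ^ 2‖ := Complex.re_le_norm _
        _ = ‖∑ i, (z i - zt) ^ 2‖ := by
            rw [norm_mul, norm_pow, huabs]; ring
    have hnσ2 : (n:ℝ) * σ2
        = (‖∑ i, (z i - zt) ^ 2‖ + ∑ i, ‖z i - zt‖ ^ 2) / 2 := by
      rw [hσ2, norm_div, Complex.norm_natCast]
      field_simp
    have hnσ : ∑ i, a i ^ 2 ≤ (n:ℝ) * σ2 := by
      rw [hsum2, hnσ2]
      linarith
    have hkey := real_mr_aux n a hasum T
    rw [haT, hT] at hkey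
    have hrs : (0:ℝ) ≤ (r:ℝ) * ((n:ℝ) - r) := mul_nonneg (le_of_lt hr0) (by linarith)
    have h5 : (r:ℝ) * ((n:ℝ) - r) * ∑ i, a i ^ 2
        ≤ (r:ℝ) * ((n:ℝ) - r) * ((n:ℝ) * σ2) := mul_le_mul_of_nonneg_left hnσ hrs
    have h6 : (n:ℝ) * ‖A‖ ^ 2 ≤ (n:ℝ) * ((r:ℝ) * ((n:ℝ) - r) * σ2) := by
      calc (n:ℝ) * ‖A‖ ^ 2 ≤ (r:ℝ) * ((n:ℝ) - r) * ∑ i, a i ^ 2 := hkey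
        _ ≤ (r:ℝ) * ((n:ℝ) - r) * ((n:ℝ) * σ2) := h5
        _ = (n:ℝ) * ((r:ℝ) * ((n:ℝ) - r) * σ2) := by ring
    have h7 : ‖A‖ ^ 2 ≤ (r:ℝ) * ((n:ℝ) - r) * σ2 :=
      le_of_mul_le_mul_left h6 hn0
    rw [hγA, norm_div, Complex.norm_natCast, div_pow]
    rw [div_le_iff₀ (by positivity : (0:ℝ) < (r:ℝ) ^ 2)]
    calc ‖A‖ ^ 2 ≤ (r:ℝ) * ((n:ℝ) - r) * σ2 := h7
      _ = ((n:ℝ) - r) / r * σ2 * (r:ℝ) ^ 2 := by field_simp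
end

section
/- Let z₁,…,zₙ (n ≥ 2) be complex numbers. Then for every j = 1,…,n one has |z_j − z̃|² ≤ (n−1)·σ_z² (a complex-number extension of Samuelson's inequality). -/
/-- Complex extension of Samuelson's inequality: `|z_j - z̃|² ≤ (n-1)·σ_z²`. -/
theorem stmt_4 (n : ℕ) (hn : 2 ≤ n) (z : Fin n → ℂ) (zt : ℂ)
    (hzt : zt = (∑ i, z i) / n)
    (σ2 : ℝ)
    (hσ2 : σ2 = (‖(∑ i, (z i - zt) ^ 2) / n‖
        + (∑ i, ‖z i - zt‖ ^ 2) / n) / 2) :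
    ∀ j, ‖z j - zt‖ ^ 2 ≤ ((n : ℝ) - 1) * σ2 := by
  intro j
  have hnpos : (0:ℝ) < n := by positivity
  have hn0 : (n : ℝ) ≠ 0 := ne_of_gt hnpos
  have hn0c : (n : ℂ) ≠ 0 := Nat.cast_ne_zero.mpr (by omega)
  set w : Fin n → ℂ := fun i => z i - zt with hw
  have hsum : ∑ i, w i = 0 := by
    simp only [hw, Finset.sum_sub_distrib, Finset.sum_const, Finset.card_univ,
      Fintype.card_fin, nsmul_eq_mul, hzt]
    field_simp
    simp
  obtain ⟨u, hu1, huj⟩ : ∃ u : ℂ, ‖u‖ = 1 ∧ u * w j = (‖w j‖ : ℂ) := by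
    by_cases h : w j = 0
    · exact ⟨1, by simp [h]⟩
    · refine ⟨(starRingEnd ℂ (w j)) / ‖w j‖, ?_, ?_⟩
      · simp [norm_div, Complex.norm_conj, div_self, (norm_ne_zero_iff.mpr h)]
      · rw [div_mul_eq_mul_div, mul_comm, Complex.mul_conj']
        rw [sq]
        field_simp
  set a : Fin n → ℝ := fun i => (u * w i).re with ha
  have ha_sum : ∑ i, a i = 0 := by
    have h2 : (u * ∑ i, w i).re = 0 := by rw [hsum]; simp
    rw [Finset.mul_sum, Complex.re_sum] at h2
    simpa [ha] using h2
  have haj : a j = ‖w j‖ := by rw [ha]; simp [huj]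
  -- real Samuelson
  have hsam : (n:ℝ) * a j ^ 2 ≤ ((n:ℝ) - 1) * ∑ i, a i ^ 2 := by
    have he : ∑ i ∈ Finset.univ.erase j, a i + a j = ∑ i, a i :=
      Finset.sum_erase_add _ _ (Finset.mem_univ j)
    have he2 : ∑ i ∈ Finset.univ.erase j, a i ^ 2 + a j ^ 2 = ∑ i, a i ^ 2 :=
      Finset.sum_erase_add _ _ (Finset.mem_univ j)
    have hcs : (∑ i ∈ Finset.univ.erase j, a i) ^ 2
        ≤ ((Finset.univ.erase j).card : ℝ) * ∑ i ∈ Finset.univ.erase j, a i ^ 2 :=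
      sq_sum_le_card_mul_sum_sq
    have hcard : ((Finset.univ.erase j).card : ℝ) = (n:ℝ) - 1 := by
      rw [Finset.card_erase_of_mem (Finset.mem_univ j)]
      simp [Nat.cast_sub (by omega : 1 ≤ n)]
    have hj2 : (∑ i ∈ Finset.univ.erase j, a i) = - a j := by linarith [ha_sum, he]
    rw [hj2, hcard] at hcs
    nlinarith [he2]
  -- key bound on ∑ a²
  have hkey : ∑ i, a i ^ 2
      ≤ (‖∑ i, w i ^ 2‖ + ∑ i, ‖w i‖ ^ 2) / 2 := by
    have hpt : ∀ i, 2 * a i ^ 2 = ((u * w i) ^ 2).re + ‖w i‖ ^ 2 := by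
      intro i
      have habs : ‖w i‖ = ‖u * w i‖ := by
        rw [norm_mul, hu1, one_mul]
      rw [habs, pow_two ((u * w i)), Complex.mul_re, Complex.sq_norm,
        Complex.normSq_apply, ha]
      ring
    have hre : (u ^ 2 * ∑ i, w i ^ 2).re = ∑ i, ((u * w i) ^ 2).re := by
      rw [Finset.mul_sum, Complex.re_sum]
      congr 1; ext i; ring_nf
    have hle : (u ^ 2 * ∑ i, w i ^ 2).re ≤ ‖∑ i, w i ^ 2‖ := by
      calc (u ^ 2 * ∑ i, w i ^ 2).re ≤ ‖u ^ 2 * ∑ i, w i ^ 2‖ :=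
            Complex.re_le_norm _
        _ = ‖∑ i, w i ^ 2‖ := by rw [norm_mul, norm_pow, hu1]; simp
    have h2 : 2 * ∑ i, a i ^ 2 = (u ^ 2 * ∑ i, w i ^ 2).re + ∑ i, ‖w i‖ ^ 2 := by
      rw [hre, Finset.mul_sum, ← Finset.sum_add_distrib]
      exact Finset.sum_congr rfl fun i _ => hpt i
    linarith
  -- finish
  have hσ : (n:ℝ) * σ2 = (‖∑ i, w i ^ 2‖ + ∑ i, ‖w i‖ ^ 2) / 2 := by
    rw [hσ2]
    have : ‖(∑ i, (z i - zt) ^ 2) / n‖ = ‖∑ i, w i ^ 2‖ / n := by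
      rw [norm_div]; simp [hw]
    rw [this]
    simp only [hw]
    field_simp
  have hfin : (n:ℝ) * (‖w j‖ ^ 2) ≤ (n:ℝ) * (((n:ℝ) - 1) * σ2) := by
    calc (n:ℝ) * (‖w j‖ ^ 2) = (n:ℝ) * a j ^ 2 := by rw [haj]
      _ ≤ ((n:ℝ) - 1) * ∑ i, a i ^ 2 := hsam
      _ ≤ ((n:ℝ) - 1) * ((‖∑ i, w i ^ 2‖ + ∑ i, ‖w i‖ ^ 2) / 2) := by
          apply mul_le_mul_of_nonneg_left hkey; linarith [show (2:ℝ) ≤ (n:ℝ) from by exact_mod_cast hn]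
      _ = ((n:ℝ) - 1) * ((n:ℝ) * σ2) := by rw [hσ]
      _ = (n:ℝ) * (((n:ℝ) - 1) * σ2) := by ring
  have := le_of_mul_le_mul_left hfin hnpos
  simpa [hw] using this
end

section
/- Let z₁,…,zₙ (n ≥ 2) be complex numbers. Then for all indices j, k ∈ {1,…,n}, σ_z² ≥ |z_j − z_k|²/(2n) (a complex-number extension of Nagy's inequality). -/
open Complex Finset

lemma nagy_aux (u v : ℂ) (hu : ‖u‖ = 1) :
    2 * (u * v).re ^ 2 = ‖v‖ ^ 2 + (u ^ 2 * v ^ 2).re := by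
  have h1 : ‖v‖ ^ 2 = ‖u * v‖ ^ 2 := by rw [norm_mul, hu, one_mul]
  have h2 : u ^ 2 * v ^ 2 = (u * v) * (u * v) := by ring
  rw [h1, h2, Complex.sq_norm, Complex.normSq_apply]
  simp only [Complex.mul_re, Complex.mul_im]
  ring

lemma key_nagy {n : ℕ} (w : Fin n → ℂ) (j k : Fin n) (hjk : j ≠ k) :
    ‖w j - w k‖ ^ 2 ≤
      ‖∑ i, (w i) ^ 2‖ + ∑ i, ‖w i‖ ^ 2 := by
  set d := w j - w k with hd
  by_cases hd0 : d = 0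
  · rw [hd0]
    simp only [norm_zero, ne_eq, OfNat.ofNat_ne_zero, not_false_eq_true, zero_pow]
    positivity
  have habs : ‖d‖ ≠ 0 := by simpa using hd0
  set u : ℂ := (starRingEnd ℂ) d / (‖d‖ : ℂ) with hu
  have hu1 : ‖u‖ = 1 := by
    rw [hu, norm_div]
    simp [habs]
  set x : Fin n → ℝ := fun i => (u * w i).re with hx
  have hpt : ∀ i, 2 * x i ^ 2 = ‖w i‖ ^ 2 + (u ^ 2 * (w i) ^ 2).re :=
    fun i => nagy_aux u (w i) hu1
  have hud : u * d = (‖d‖ : ℂ) := by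
    rw [hu, div_mul_eq_mul_div, mul_comm ((starRingEnd ℂ) d) d, Complex.mul_conj,
      Complex.normSq_eq_norm_sq]
    have hc : (‖d‖ : ℂ) ≠ 0 := by exact_mod_cast habs
    push_cast
    rw [sq, mul_div_assoc, div_self hc, mul_one]
  have hxd : x j - x k = ‖d‖ := by
    have h : x j - x k = (u * d).re := by
      simp only [hx, hd, mul_sub, Complex.sub_re]
    rw [h, hud, Complex.ofReal_re]
  have h2 : (x j - x k) ^ 2 ≤ 2 * (x j ^ 2 + x k ^ 2) := by
    nlinarith [sq_nonneg (x j + x k)]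
  have h3 : x j ^ 2 + x k ^ 2 ≤ ∑ i, x i ^ 2 := by
    have hsub : ({j, k} : Finset (Fin n)) ⊆ Finset.univ := by simp
    have := Finset.sum_le_sum_of_subset_of_nonneg hsub
      (fun i _ _ => sq_nonneg (x i))
    rwa [Finset.sum_pair hjk] at this
  have h4 : 2 * ∑ i, x i ^ 2 =
      (∑ i, ‖w i‖ ^ 2) + (u ^ 2 * ∑ i, (w i) ^ 2).re := by
    rw [Finset.mul_sum, Finset.mul_sum, Complex.re_sum, ← Finset.sum_add_distrib]
    exact Finset.sum_congr rfl fun i _ => hpt i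
  have h5 : (u ^ 2 * ∑ i, (w i) ^ 2).re ≤ ‖∑ i, (w i) ^ 2‖ := by
    calc (u ^ 2 * ∑ i, (w i) ^ 2).re ≤ ‖u ^ 2 * ∑ i, (w i) ^ 2‖ :=
          Complex.re_le_norm _
      _ = ‖∑ i, (w i) ^ 2‖ := by rw [norm_mul, norm_pow, hu1]; ring
  calc ‖d‖ ^ 2 = (x j - x k) ^ 2 := by rw [hxd]
    _ ≤ 2 * (x j ^ 2 + x k ^ 2) := h2
    _ ≤ 2 * ∑ i, x i ^ 2 := by linarith
    _ = (∑ i, ‖w i‖ ^ 2) + (u ^ 2 * ∑ i, (w i) ^ 2).re := h4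
    _ ≤ ‖∑ i, (w i) ^ 2‖ + ∑ i, ‖w i‖ ^ 2 := by linarith

/-- Complex extension of Nagy's inequality: `σ_z² ≥ |z_j - z_k|²/(2n)`. -/
theorem stmt_5 (n : ℕ) (hn : 2 ≤ n) (z : Fin n → ℂ) (zt : ℂ)
    (hzt : zt = (∑ i, z i) / n)
    (σ2 : ℝ)
    (hσ2 : σ2 = (‖(∑ i, (z i - zt) ^ 2) / n‖
        + (∑ i, ‖z i - zt‖ ^ 2) / n) / 2) :
    ∀ j k, ‖z j - z k‖ ^ 2 / (2 * n) ≤ σ2 := by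
  intro j k
  set w : Fin n → ℂ := fun i => z i - zt with hw
  have hn0 : (0 : ℝ) < n := by positivity
  have hzw : z j - z k = w j - w k := by simp [hw]
  by_cases hjk : j = k
  · subst hjk
    simp only [sub_self, norm_zero, ne_eq, OfNat.ofNat_ne_zero, not_false_eq_true, zero_pow,
      zero_div]
    rw [hσ2]
    positivity
  have key := key_nagy w j k hjk
  have habsdiv : ‖(∑ i, (w i) ^ 2) / n‖
      = ‖∑ i, (w i) ^ 2‖ / n := by
    rw [norm_div, Complex.norm_natCast]
  rw [hσ2, hzw, habsdiv]
  rw [← add_div, div_div]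
  rw [div_le_div_iff₀ (by positivity) (by positivity)]
  nlinarith [key, hn0]
end

section
/- Let z₁,…,zₙ be complex numbers and let T be a nonempty subset of {1,…,n} with |T| = m (1 ≤ m ≤ n). Let σ_{z(m)}² denote the quantity σ² computed from the subfamily (zᵢ)_{i∈T} (with its own mean), and σ_z² the quantity computed from all n numbers. Then σ_{z(m)}² ≤ (n/m)·σ_z². -/
open Finset

private lemma sq_re_eq (c : ℂ) : 2 * (c.re)^2 = (c^2).re + ‖c‖ ^ 2 := by
  have h : (c^2).re = c.re * c.re - c.im * c.im := by rw [sq, Complex.mul_re]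
  rw [Complex.sq_norm, Complex.normSq_apply, h]
  ring

private lemma key_sum {ι : Type*} (S : Finset ι) (f : ι → ℂ) (w : ℂ)
    (hw : ‖w‖ = 1) :
    2 * ∑ i ∈ S, ((w * f i).re)^2
      = (w^2 * ∑ i ∈ S, (f i)^2).re + ∑ i ∈ S, ‖f i‖ ^ 2 := by
  calc 2 * ∑ i ∈ S, ((w * f i).re)^2 = ∑ i ∈ S, (2 * ((w * f i).re)^2) := by
        rw [Finset.mul_sum]
    _ = ∑ i ∈ S, (((w * f i)^2).re + ‖f i‖^2) := by
        refine Finset.sum_congr rfl fun i _ => ?_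
        rw [sq_re_eq]
        congr 2
        rw [norm_mul, hw, one_mul]
    _ = (∑ i ∈ S, (w * f i)^2).re + ∑ i ∈ S, ‖f i‖^2 := by
        rw [Finset.sum_add_distrib, Complex.re_sum]
    _ = (w^2 * ∑ i ∈ S, (f i)^2).re + ∑ i ∈ S, ‖f i‖^2 := by
        rw [Finset.mul_sum]
        congr 2
        exact Finset.sum_congr rfl fun i _ => by ring

private lemma shift_sum {ι : Type*} (S : Finset ι) (a : ι → ℝ) (μ c : ℝ)
    (hμ : (S.card : ℝ) * μ = ∑ i ∈ S, a i) :
    ∑ i ∈ S, (a i - μ)^2 ≤ ∑ i ∈ S, (a i - c)^2 := by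
  have h0 : ∑ i ∈ S, (a i - μ) = 0 := by
    rw [Finset.sum_sub_distrib, Finset.sum_const, nsmul_eq_mul, ← hμ, sub_self]
  have h : ∑ i ∈ S, (a i - c)^2 = ∑ i ∈ S, (a i - μ)^2 + S.card * (μ - c)^2 := by
    have he : ∀ i ∈ S, (a i - c)^2 = (a i - μ)^2 + 2*(μ-c)*(a i - μ) + (μ-c)^2 :=
      fun i _ => by ring
    rw [Finset.sum_congr rfl he, Finset.sum_add_distrib, Finset.sum_add_distrib,
        ← Finset.mul_sum, h0, mul_zero, add_zero, Finset.sum_const, nsmul_eq_mul]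
  have hnn : (0:ℝ) ≤ (S.card : ℝ) * (μ - c)^2 :=
    mul_nonneg (Nat.cast_nonneg _) (sq_nonneg _)
  linarith

/-- For a subfamily of `m` of the `n` complex numbers, `σ_{z(m)}² ≤ (n/m)·σ_z²`. -/
theorem stmt_6 (n : ℕ) (hn : 1 ≤ n) (z : Fin n → ℂ) (zt : ℂ)
    (hzt : zt = (∑ i, z i) / n)
    (σ2 : ℝ)
    (hσ2 : σ2 = (‖(∑ i, (z i - zt) ^ 2) / n‖
        + (∑ i, ‖z i - zt‖ ^ 2) / n) / 2)
    (T : Finset (Fin n)) (m : ℕ) (hm : 1 ≤ m) (hT : T.card = m)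
    (ztT : ℂ) (hztT : ztT = (∑ i ∈ T, z i) / m)
    (σ2T : ℝ)
    (hσ2T : σ2T = (‖(∑ i ∈ T, (z i - ztT) ^ 2) / m‖
        + (∑ i ∈ T, ‖z i - ztT‖ ^ 2) / m) / 2) :
    σ2T ≤ ((n : ℝ) / m) * σ2 := by
  have hm0 : (0:ℝ) < m := by exact_mod_cast hm
  have hn0 : (0:ℝ) < n := by exact_mod_cast hn
  set s : ℂ := ∑ i ∈ T, (z i - ztT)^2 with hsdef
  set t : ℂ := ∑ i, (z i - zt)^2 with htdef
  -- choose a unit w with (w^2 * s).re = |s|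
  obtain ⟨w, hw, hws⟩ : ∃ w : ℂ, ‖w‖ = 1 ∧ (w^2 * s).re = ‖s‖ := by
    by_cases h : s = 0
    · exact ⟨1, by simp, by simp [h]⟩
    · set u : ℂ := ((‖s‖ : ℝ) : ℂ) / s with hu
      have hsabs : ‖s‖ ≠ 0 := by simpa using h
      have hune : u ≠ 0 := div_ne_zero (by exact_mod_cast hsabs) h
      have habsu : ‖u‖ = 1 := by
        rw [hu, norm_div, Complex.norm_real, norm_norm,
          div_self hsabs]
      refine ⟨Complex.exp (((1:ℝ)/2 : ℝ) * Complex.log u), ?_, ?_⟩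
      · rw [Complex.norm_exp]
        have : (((1:ℝ)/2 : ℝ) * Complex.log u).re = 0 := by
          rw [Complex.re_ofReal_mul, Complex.log_re, habsu, Real.log_one, mul_zero]
        rw [this, Real.exp_zero]
      · have hsq : Complex.exp (((1:ℝ)/2 : ℝ) * Complex.log u) ^ 2 = u := by
          rw [sq, ← Complex.exp_add]
          have : (((1:ℝ)/2 : ℝ) : ℂ) * Complex.log u + (((1:ℝ)/2 : ℝ) : ℂ) * Complex.log u
              = Complex.log u := by push_cast; ring
          rw [this, Complex.exp_log hune]
        rw [hsq, hu, div_mul_cancel₀ _ h, Complex.ofReal_re]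
  -- key quantities
  have habsm : ‖(s : ℂ) / m‖ = ‖s‖ / m := by
    rw [norm_div, Complex.norm_natCast]
  have habsn : ‖(t : ℂ) / n‖ = ‖t‖ / n := by
    rw [norm_div, Complex.norm_natCast]
  -- main inequality : |s| + ∑_T |·|² ≤ |t| + ∑ |·|²
  have main : ‖s‖ + ∑ i ∈ T, ‖z i - ztT‖ ^ 2
      ≤ ‖t‖ + ∑ i, ‖z i - zt‖ ^ 2 := by
    have e1 : ‖s‖ + ∑ i ∈ T, ‖z i - ztT‖ ^ 2
        = 2 * ∑ i ∈ T, ((w * (z i - ztT)).re)^2 := by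
      rw [key_sum T (fun i => z i - ztT) w hw, ← hsdef, hws]
    -- shift from ztT to zt on T
    have hμ : (T.card : ℝ) * (w * ztT).re = ∑ i ∈ T, (w * z i).re := by
      have : w * ztT = (∑ i ∈ T, w * z i) / ((m : ℝ) : ℂ) := by
        rw [hztT, ← Finset.mul_sum]; push_cast; ring
      rw [this, Complex.div_ofReal_re, hT, ← Complex.re_sum]
      field_simp
    have e2 : ∑ i ∈ T, ((w * (z i - ztT)).re)^2 ≤ ∑ i ∈ T, ((w * (z i - zt)).re)^2 := by
      have h1 : ∀ i ∈ T, ((w * (z i - ztT)).re)^2 = ((w * z i).re - (w * ztT).re)^2 := by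
        intro i _; congr 1
        rw [mul_sub, Complex.sub_re]
      have h2 : ∀ i ∈ T, ((w * (z i - zt)).re)^2 = ((w * z i).re - (w * zt).re)^2 := by
        intro i _; congr 1
        rw [mul_sub, Complex.sub_re]
      rw [Finset.sum_congr rfl h1, Finset.sum_congr rfl h2]
      exact shift_sum T (fun i => (w * z i).re) _ _ hμ
    have e3 : ∑ i ∈ T, ((w * (z i - zt)).re)^2 ≤ ∑ i, ((w * (z i - zt)).re)^2 :=
      Finset.sum_le_sum_of_subset_of_nonneg (Finset.subset_univ T)
        (fun i _ _ => sq_nonneg _)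
    have e4 : 2 * ∑ i, ((w * (z i - zt)).re)^2
        ≤ ‖t‖ + ∑ i, ‖z i - zt‖ ^ 2 := by
      rw [key_sum Finset.univ (fun i => z i - zt) w hw, ← htdef]
      have : (w^2 * t).re ≤ ‖t‖ := by
        calc (w^2 * t).re ≤ ‖w^2 * t‖ := Complex.re_le_norm _
          _ = ‖t‖ := by rw [norm_mul, norm_pow, hw, one_pow, one_mul]
      linarith
    linarith
  -- conclude
  rw [hσ2T, hσ2, habsm, habsn, ← add_div, ← add_div]
  have hrhs : (n:ℝ)/m * ((‖t‖ + ∑ i, ‖z i - zt‖ ^ 2) / n / 2)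
      = (‖t‖ + ∑ i, ‖z i - zt‖ ^ 2) / m / 2 := by
    field_simp
  rw [hrhs]
  gcongr
end

section
/- Let x₁,…,xₙ (n ≥ 2) be real numbers with 0 ≤ a < x̄ ≤ s. Then s² + ((s² − x̄²)/(2x̄))² ≤ (b − a)²/4. -/
set_option maxHeartbeats 1000000 in
/-- If `0 ≤ a < x̄ ≤ s`, then `s² + ((s² - x̄²)/(2x̄))² ≤ (b - a)²/4`. -/
theorem stmt_7 (n : ℕ) (hn : 2 ≤ n) (x : Fin n → ℝ) (xb s a b : ℝ)
    (hxb : xb = (∑ i, x i) / n)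
    (hs0 : 0 ≤ s) (hs2 : s ^ 2 = (∑ i, (x i - xb) ^ 2) / n)
    (ha : IsLeast (Set.range x) a) (hb : IsGreatest (Set.range x) b)
    (h0a : 0 ≤ a) (hax : a < xb) (hxs : xb ≤ s) :
    s ^ 2 + ((s ^ 2 - xb ^ 2) / (2 * xb)) ^ 2 ≤ (b - a) ^ 2 / 4 := by
  have hn0 : (0:ℝ) < n := by positivity
  have hm : 0 < xb := lt_of_le_of_lt h0a hax
  have hax' : ∀ i, a ≤ x i := fun i => ha.2 ⟨i, rfl⟩
  have hbx' : ∀ i, x i ≤ b := fun i => hb.2 ⟨i, rfl⟩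
  have hS1 : ∑ i, x i = n * xb := by rw [hxb]; field_simp
  have hns2 : (n:ℝ) * s ^ 2 = ∑ i, (x i - xb) ^ 2 := by rw [hs2]; field_simp
  have e1 : ∑ i, (x i - xb) ^ 2
      = (∑ i, x i ^ 2) - 2 * xb * (∑ i, x i) + n * xb ^ 2 := by
    have h : ∀ i : Fin n, (x i - xb)^2 = x i^2 - 2*xb*x i + xb^2 := fun i => by ring
    simp only [h, Finset.sum_add_distrib, Finset.sum_sub_distrib, ← Finset.mul_sum,
      Finset.sum_const, Finset.card_univ, nsmul_eq_mul, Fintype.card_fin]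
  have e2 : ∑ i, (x i - a) * (b - x i)
      = -(∑ i, x i ^ 2) + (a + b) * (∑ i, x i) - n * (a * b) := by
    have h : ∀ i : Fin n, (x i - a) * (b - x i) = -(x i^2) + (a+b)*x i - a*b :=
      fun i => by ring
    simp only [h, Finset.sum_add_distrib, Finset.sum_sub_distrib, ← Finset.mul_sum,
      Finset.sum_const, Finset.card_univ, nsmul_eq_mul, Fintype.card_fin, Finset.sum_neg_distrib]
    ring
  have e2nn : 0 ≤ ∑ i, (x i - a) * (b - x i) :=
    Finset.sum_nonneg fun i _ => mul_nonneg (sub_nonneg.2 (hax' i)) (sub_nonneg.2 (hbx' i))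
  -- Bhatia–Davis: s² ≤ (x̄ - a)(b - x̄)
  have key : s ^ 2 ≤ (xb - a) * (b - xb) := by
    have h1 : (n:ℝ) * s ^ 2 ≤ (n:ℝ) * ((xb - a) * (b - xb)) := by
      rw [hns2, e1]
      rw [e2] at e2nn
      rw [hS1] at *
      nlinarith [e2nn]
    exact le_of_mul_le_mul_left h1 hn0
  have hms : xb ^ 2 ≤ s ^ 2 := by nlinarith
  -- hence b - x̄ ≥ x̄
  have hv : xb ≤ b - xb := by nlinarith [mul_pos hm hm]
  have H : 4 * xb ^ 2 * s ^ 2 + (s ^ 2 - xb ^ 2) ^ 2 ≤ xb ^ 2 * (b - a) ^ 2 := by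
    nlinarith [mul_nonneg (mul_nonneg (mul_nonneg (le_of_lt (by nlinarith : (0:ℝ) < xb + (xb - a)))
        (le_of_lt (by nlinarith : (0:ℝ) < xb + (b - xb)))) h0a) (by nlinarith : (0:ℝ) ≤ (b - xb) - xb),
      mul_nonneg (sub_nonneg.2 key) (by nlinarith : (0:ℝ) ≤ (xb - a)*(b - xb) + s^2 - 2*xb^2),
      mul_nonneg (mul_nonneg (le_of_lt hm) (le_of_lt hm)) (sub_nonneg.2 key)]
  calc s ^ 2 + ((s ^ 2 - xb ^ 2) / (2 * xb)) ^ 2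
      = (4 * xb ^ 2 * s ^ 2 + (s ^ 2 - xb ^ 2) ^ 2) / (4 * xb ^ 2) := by
        field_simp; ring
    _ ≤ (xb ^ 2 * (b - a) ^ 2) / (4 * xb ^ 2) := by gcongr
    _ = (b - a) ^ 2 / 4 := by field_simp
end

section
/- Let x₁,…,xₙ (n ≥ 3) be real numbers with 0 ≤ a < x̄ ≤ s. Then s² − (2/(n−2))·((s² − x̄²)/(2x̄))² ≥ (b − a)²/(2n). -/
lemma core (nr m a b q : ℝ) (hn : 3 ≤ nr) (hm : 0 < m) (ha : 0 ≤ a) (ham : a < m)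
    (h1 : (nr-2)*(a^2+b^2) + (nr*m-a-b)^2 ≤ nr*(nr-2)*(q+m^2))
    (h2 : q ≤ (b-m)*(m-a)) (h3 : m^2 ≤ q) :
    (b-a)^2/(2*nr) ≤ q - (2/(nr-2))*((q-m^2)/(2*m))^2 := by
  have hn0 : (0:ℝ) < nr := by linarith
  have hn2 : (0:ℝ) < nr - 2 := by linarith
  have hma : (0:ℝ) < m - a := by linarith
  have hs5 : 0 ≤ b - 2*m - a := by
    have h := h2.trans' h3
    nlinarith [sq_nonneg a]
  have hb2m : (0:ℝ) ≤ b - 2*m := by linarith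
  have hab : (0:ℝ) < m*(b-a) + q + m^2 := by nlinarith
  have T1 : (0:ℝ) ≤ 2*m^2 * (nr*(nr-2)*(q+m^2) - ((nr-2)*(a^2+b^2) + (nr*m-a-b)^2)) := by
    have := sub_nonneg.2 h1
    positivity
  have T2 : (0:ℝ) ≤ nr*(m*(b-2*m-a) + (q - m^2)) * ((b-m)*(m-a) - q) := by
    have h2' : 0 ≤ (b-m)*(m-a) - q := by linarith
    have hx : 0 ≤ m*(b-2*m-a) + (q - m^2) := by
      have := mul_nonneg hm.le hs5
      linarith
    exact mul_nonneg (mul_nonneg hn0.le hx) h2'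
  have T3 : (0:ℝ) ≤ nr*a*(b-2*m)*(m*(b-a)+q+m^2) := by positivity
  have key : 0 ≤ 2*nr*(nr-2)*m^2*q - nr*(q-m^2)^2 - (nr-2)*m^2*(b-a)^2 := by
    have hid : 2*nr*(nr-2)*m^2*q - nr*(q-m^2)^2 - (nr-2)*m^2*(b-a)^2
        = 2*m^2 * (nr*(nr-2)*(q+m^2) - ((nr-2)*(a^2+b^2) + (nr*m-a-b)^2))
          + nr*(m*(b-2*m-a) + (q - m^2)) * ((b-m)*(m-a) - q)
          + nr*a*(b-2*m)*(m*(b-a)+q+m^2) := by ring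
    rw [hid]; linarith
  have hexp : q - (2/(nr-2))*((q-m^2)/(2*m))^2 - (b-a)^2/(2*nr)
      = (2*nr*(nr-2)*m^2*q - nr*(q-m^2)^2 - (nr-2)*m^2*(b-a)^2) / (2*nr*(nr-2)*m^2) := by
    field_simp
  have := div_nonneg key (by positivity : (0:ℝ) ≤ 2*nr*(nr-2)*m^2)
  linarith [hexp ▸ this]


/-- If `0 ≤ a < x̄ ≤ s` and `n ≥ 3`, then
`s² - (2/(n-2))·((s² - x̄²)/(2x̄))² ≥ (b - a)²/(2n)`. -/
theorem stmt_8 (n : ℕ) (hn : 3 ≤ n) (x : Fin n → ℝ) (xb s a b : ℝ)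
    (hxb : xb = (∑ i, x i) / n)
    (hs0 : 0 ≤ s) (hs2 : s ^ 2 = (∑ i, (x i - xb) ^ 2) / n)
    (ha : IsLeast (Set.range x) a) (hb : IsGreatest (Set.range x) b)
    (h0a : 0 ≤ a) (hax : a < xb) (hxs : xb ≤ s) :
    (b - a) ^ 2 / (2 * n) ≤
      s ^ 2 - (2 / ((n : ℝ) - 2)) * ((s ^ 2 - xb ^ 2) / (2 * xb)) ^ 2 := by
  have hn0 : (0:ℝ) < n := by positivity
  have hnR : (3:ℝ) ≤ (n:ℝ) := by exact_mod_cast hn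
  have hm : 0 < xb := lt_of_le_of_lt h0a hax
  -- bounds on each point
  have hla : ∀ i, a ≤ x i := fun i => ha.2 ⟨i, rfl⟩
  have hub : ∀ i, x i ≤ b := fun i => hb.2 ⟨i, rfl⟩
  obtain ⟨i0, hi0⟩ := ha.1
  obtain ⟨i1, hi1⟩ := hb.1
  -- sum facts
  have hsx : ∑ i, x i = n * xb := by
    rw [hxb]; field_simp
  have hsv : ∑ i, (x i - xb)^2 = n * s^2 := by
    rw [hs2]; field_simp
  have hsq : ∑ i, (x i)^2 = n * (s^2 + xb^2) := by
    have e : ∑ i, (x i - xb)^2 = ∑ i, (x i)^2 - 2*xb*(∑ i, x i) + n * xb^2 := by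
      rw [Finset.mul_sum]
      rw [← Finset.sum_sub_distrib]
      have : (n : ℝ) * xb^2 = ∑ _i : Fin n, xb^2 := by
        rw [Finset.sum_const, Finset.card_univ, Fintype.card_fin, nsmul_eq_mul]
      rw [this, ← Finset.sum_add_distrib]
      exact Finset.sum_congr rfl fun i _ => by ring
    rw [hsx] at e
    rw [hsv] at e
    nlinarith [e]
  have hxbb : xb ≤ b := by
    by_contra hc
    push_neg at hc
    have : ∑ i, x i ≤ ∑ _i : Fin n, b := Finset.sum_le_sum fun i _ => hub i
    rw [hsx, Finset.sum_const, Finset.card_univ, Fintype.card_fin, nsmul_eq_mul] at this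
    nlinarith
  have habne : a < b := lt_of_lt_of_le hax hxbb
  have hne : i0 ≠ i1 := by
    intro h; rw [h, hi1] at hi0; exact absurd hi0 (ne_of_gt habne)
  -- h2 : q ≤ (b - xb)(xb - a)
  have h2 : s^2 ≤ (b - xb)*(xb - a) := by
    have hnn : 0 ≤ ∑ i, (b - x i)*(x i - a) :=
      Finset.sum_nonneg fun i _ => mul_nonneg (by linarith [hub i]) (by linarith [hla i])
    have hid : ∑ i, (b - x i)*(x i - a)
        = (a+b) * (∑ i, x i) - ∑ i, (x i)^2 - n * (a*b) := by
      rw [Finset.mul_sum, ← Finset.sum_sub_distrib]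
      have : (n : ℝ) * (a*b) = ∑ _i : Fin n, a*b := by
        rw [Finset.sum_const, Finset.card_univ, Fintype.card_fin, nsmul_eq_mul]
      rw [this, ← Finset.sum_sub_distrib]
      exact Finset.sum_congr rfl fun i _ => by ring
    rw [hsx, hsq] at hid
    nlinarith [hnn, hid]
  -- h1 via Cauchy-Schwarz on the remaining n-2 points
  have h1 : ((n:ℝ)-2)*(a^2+b^2) + ((n:ℝ)*xb-a-b)^2 ≤ (n:ℝ)*((n:ℝ)-2)*(s^2+xb^2) := by
    set T : Finset (Fin n) := Finset.univ \ {i0, i1} with hT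
    have hsub : ({i0, i1} : Finset (Fin n)) ⊆ Finset.univ := Finset.subset_univ _
    have hcardT : (T.card : ℝ) = (n:ℝ) - 2 := by
      rw [hT, Finset.card_sdiff_of_subset hsub, Finset.card_univ, Fintype.card_fin,
        Finset.card_pair hne]
      have : 2 ≤ n := by omega
      push_cast [Nat.cast_sub this]
      ring
    have hsumT : ∑ i ∈ T, x i = (n:ℝ)*xb - a - b := by
      have := Finset.sum_sdiff_eq_sub (f := x) hsub
      rw [Finset.sum_pair hne, hi0, hi1, hsx] at this
      rw [hT, this]; ring
    have hsqT : ∑ i ∈ T, (x i)^2 = (n:ℝ)*(s^2+xb^2) - a^2 - b^2 := by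
      have := Finset.sum_sdiff_eq_sub (f := fun i => (x i)^2) hsub
      rw [Finset.sum_pair hne, hi0, hi1, hsq] at this
      rw [hT, this]; ring
    have hcs := sq_sum_le_card_mul_sum_sq (s := T) (f := x)
    rw [hsumT, hsqT] at hcs
    rw [hcardT] at hcs
    nlinarith [hcs]
  have h3 : xb^2 ≤ s^2 := by nlinarith
  have := core (n:ℝ) xb a b (s^2) hnR hm h0a hax h1 h2 h3
  linarith
end

section
/- Let x₁,…,xₙ (n ≥ 2) be real numbers with 0 ≤ a < x̄ ≤ s. Then (s² + x̄²)/x̄ ≤ b − a; equivalently, m₂′/x̄ ≤ b − a where m₂′ = s² + x̄² = (1/n)∑_{i=1}^n xᵢ² is the second raw moment. -/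
/-- If `0 ≤ a < x̄ ≤ s`, then `(s² + x̄²)/x̄ ≤ b - a`. -/
theorem stmt_9 (n : ℕ) (hn : 2 ≤ n) (x : Fin n → ℝ) (xb s a b : ℝ)
    (hxb : xb = (∑ i, x i) / n)
    (hs0 : 0 ≤ s) (hs2 : s ^ 2 = (∑ i, (x i - xb) ^ 2) / n)
    (ha : IsLeast (Set.range x) a) (hb : IsGreatest (Set.range x) b)
    (h0a : 0 ≤ a) (hax : a < xb) (hxs : xb ≤ s) :
    (s ^ 2 + xb ^ 2) / xb ≤ b - a := by
  have hnpos : (0:ℝ) < n := by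
    exact_mod_cast lt_of_lt_of_le (by norm_num) hn
  have hsum : ∑ i, x i = n * xb := by
    field_simp at hxb; linarith [hxb]
  have hxbpos : 0 < xb := lt_of_le_of_lt h0a hax
  have hterm : ∀ i, 0 ≤ (x i - a) * (b - x i) := by
    intro i
    have h1 : a ≤ x i := ha.2 ⟨i, rfl⟩
    have h2 : x i ≤ b := hb.2 ⟨i, rfl⟩
    exact mul_nonneg (by linarith) (by linarith)
  have hmom : ∑ i, (x i)^2 ≤ (a + b) * (n * xb) - n * (a * b) := by
    have h0 : (0:ℝ) ≤ ∑ i, (x i - a) * (b - x i) :=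
      Finset.sum_nonneg (fun i (_ : i ∈ Finset.univ) => hterm i)
    have hexp : ∑ i, (x i - a) * (b - x i)
        = (a + b) * (∑ i, x i) - n * (a * b) - ∑ i, (x i)^2 := by
      have h : ∀ i : Fin n, (x i - a) * (b - x i) = ((a + b) * x i - a * b) - x i ^ 2 :=
        fun i => by ring
      rw [Finset.sum_congr rfl (fun i _ => h i), Finset.sum_sub_distrib,
        Finset.sum_sub_distrib, ← Finset.mul_sum, Finset.sum_const,
        Finset.card_fin, nsmul_eq_mul]
    rw [hexp, hsum] at h0
    linarith
  have hkey : s ^ 2 + xb ^ 2 = (∑ i, (x i)^2) / n := by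
    rw [hs2]
    have h : ∑ i, (x i - xb)^2 = ∑ i, (x i)^2 - n * xb^2 := by
      have h2 : ∀ i : Fin n, (x i - xb)^2 = ((x i)^2 - 2*xb*(x i)) + xb^2 := by
        intro i; ring
      rw [Finset.sum_congr rfl (fun i _ => h2 i), Finset.sum_add_distrib,
        Finset.sum_sub_distrib, ← Finset.mul_sum, hsum, Finset.sum_const,
        Finset.card_fin, nsmul_eq_mul]
      ring
    rw [h]
    field_simp
    ring
  have H1 : s ^ 2 + xb ^ 2 ≤ (a + b) * xb - a * b := by
    rw [hkey, div_le_iff₀ hnpos]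
    linarith [hmom]
  have H2 : xb ^ 2 ≤ s ^ 2 := by nlinarith
  have hxbb : xb ≤ b := by
    have hle : ∑ i, x i ≤ ∑ _i : Fin n, b :=
      Finset.sum_le_sum (fun i (_ : i ∈ Finset.univ) => hb.2 ⟨i, rfl⟩)
    rw [hsum, Finset.sum_const, Finset.card_fin, nsmul_eq_mul] at hle
    nlinarith
  have h2xb : 2 * xb ≤ b := by
    nlinarith [mul_nonneg h0a (sub_nonneg.2 hxbb)]
  rw [div_le_iff₀ hxbpos]
  nlinarith [mul_nonneg h0a (by linarith : (0:ℝ) ≤ b - 2 * xb)]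
end

section
/- Let x₁,…,xₙ (n ≥ 2) be real numbers. Then s² ≥ (2/n)·(b − x̄)(x̄ − a). -/
/-- `s² ≥ (2/n)·(b - x̄)(x̄ - a)`. -/
theorem stmt_12 (n : ℕ) (hn : 2 ≤ n) (x : Fin n → ℝ) (xb s a b : ℝ)
    (hxb : xb = (∑ i, x i) / n)
    (hs0 : 0 ≤ s) (hs2 : s ^ 2 = (∑ i, (x i - xb) ^ 2) / n)
    (ha : IsLeast (Set.range x) a) (hb : IsGreatest (Set.range x) b) :
    (2 / (n : ℝ)) * ((b - xb) * (xb - a)) ≤ s ^ 2 := by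
  have hn0 : (0:ℝ) < n := by positivity
  obtain ⟨⟨i, hi⟩, -⟩ := ha
  obtain ⟨⟨j, hj⟩, -⟩ := hb
  by_cases hab : a = b
  · have h1 : (b - xb) * (xb - a) ≤ 0 := by rw [hab]; nlinarith [sq_nonneg (b - xb)]
    have h2 : (0:ℝ) ≤ s ^ 2 := sq_nonneg s
    have : 2 / (n:ℝ) * ((b - xb) * (xb - a)) ≤ 0 := by
      apply mul_nonpos_of_nonneg_of_nonpos _ h1
      positivity
    linarith
  · have hij : i ≠ j := by
      intro h; apply hab; rw [← hi, ← hj, h]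
    have hsub : ({i, j} : Finset (Fin n)) ⊆ Finset.univ := Finset.subset_univ _
    have hkey : (x i - xb) ^ 2 + (x j - xb) ^ 2 ≤ ∑ k, (x k - xb) ^ 2 := by
      have := Finset.sum_le_sum_of_subset_of_nonneg hsub
        (fun k _ _ => sq_nonneg (x k - xb))
      rwa [Finset.sum_pair hij] at this
    rw [hi, hj] at hkey
    have h2 : 2 * ((b - xb) * (xb - a)) ≤ (a - xb) ^ 2 + (b - xb) ^ 2 := by
      nlinarith [sq_nonneg (a + b - 2 * xb)]
    rw [hs2]
    calc 2 / (n:ℝ) * ((b - xb) * (xb - a)) = (2 * ((b - xb) * (xb - a))) / n := by ring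
      _ ≤ (∑ k, (x k - xb) ^ 2) / n := by gcongr; linarith
end

section
/- Let x₁,…,xₙ (n ≥ 2) be real numbers whose central moments satisfy the Leptokurtic/Mesokurtic condition m₄ ≥ 3·m₂², where m₂ = s² and m₄ = (1/n)∑_{i=1}^n (xᵢ − x̄)⁴. Then s² ≤ (b − a)·√((x̄ − a)(b − x̄)/6) ≤ (b − a)²/(2√6). -/
set_option maxHeartbeats 1600000 in
/-- For Leptokurtic or Mesokurtic data (`m₄ ≥ 3 m₂²`),
`s² ≤ (b - a)·√((x̄ - a)(b - x̄)/6) ≤ (b - a)²/(2√6)`. -/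
theorem stmt_13 (n : ℕ) (hn : 2 ≤ n) (x : Fin n → ℝ) (xb s a b : ℝ)
    (hxb : xb = (∑ i, x i) / n)
    (hs0 : 0 ≤ s) (hs2 : s ^ 2 = (∑ i, (x i - xb) ^ 2) / n)
    (ha : IsLeast (Set.range x) a) (hb : IsGreatest (Set.range x) b)
    (hkurt : 3 * (s ^ 2) ^ 2 ≤ (∑ i, (x i - xb) ^ 4) / n) :
    s ^ 2 ≤ (b - a) * Real.sqrt ((xb - a) * (b - xb) / 6) ∧
      (b - a) * Real.sqrt ((xb - a) * (b - xb) / 6) ≤ (b - a) ^ 2 / (2 * Real.sqrt 6) := by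
  have hn0 : 0 < n := by omega
  have hnr : (0:ℝ) < n := by positivity
  have hax : ∀ i, a ≤ x i := fun i => ha.2 ⟨i, rfl⟩
  have hxbb : ∀ i, x i ≤ b := fun i => hb.2 ⟨i, rfl⟩
  have hsum0 : ∑ i, (x i - xb) = 0 := by
    rw [Finset.sum_sub_distrib, Finset.sum_const, Finset.card_univ, Fintype.card_fin, hxb]
    rw [nsmul_eq_mul]
    field_simp
    ring
  have haxb : a ≤ xb := by
    rw [hxb, le_div_iff₀ hnr]
    calc a * n = ∑ _i : Fin n, a := by
          rw [Finset.sum_const, Finset.card_univ, Fintype.card_fin]; ring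
      _ ≤ ∑ i, x i := Finset.sum_le_sum fun i _ => hax i
  have hxbB : xb ≤ b := by
    rw [hxb, div_le_iff₀ hnr]
    calc (∑ i, x i) ≤ ∑ _i : Fin n, b := Finset.sum_le_sum fun i _ => hxbb i
      _ = b * n := by rw [Finset.sum_const, Finset.card_univ, Fintype.card_fin]; ring
  have hα : 0 ≤ xb - a := by linarith
  have hβ : 0 ≤ b - xb := by linarith
  have hba : 0 ≤ b - a := by linarith
  have hpt : ∀ i, (x i - xb)^2 ≤ (xb - a) * (b - xb) + ((b - xb) - (xb - a)) * (x i - xb) := by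
    intro i
    nlinarith [hax i, hxbb i]
  have hpt4 : ∀ i, (x i - xb)^4 ≤ ((xb - a) * (b - xb) + ((b - xb) - (xb - a)) * (x i - xb))^2 := by
    intro i
    nlinarith [hpt i, sq_nonneg (x i - xb)]
  have hS2 : ∑ i, (x i - xb)^2 = n * s^2 := by
    rw [hs2]; field_simp
  have ht0 : 0 ≤ s^2 := sq_nonneg s
  -- t ≤ αβ
  have hsum1 : ∑ i, ((xb - a) * (b - xb) + ((b - xb) - (xb - a)) * (x i - xb)) = n * ((xb - a) * (b - xb)) := by
    rw [Finset.sum_add_distrib,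
      show (∑ i, ((b - xb) - (xb - a)) * (x i - xb)) = ((b - xb) - (xb - a)) * ∑ i, (x i - xb)
        from (Finset.mul_sum _ _ _).symm, hsum0, mul_zero, add_zero, Finset.sum_const,
      Finset.card_univ, Fintype.card_fin, nsmul_eq_mul]
  have ht_le : s^2 ≤ (xb - a) * (b - xb) := by
    have h := Finset.sum_le_sum (s := Finset.univ) (fun i _ => hpt i)
    rw [hS2, hsum1] at h
    exact le_of_mul_le_mul_left (by linarith [h]) hnr
  -- 3 t² ≤ α²β² + c² t
  have hsum2 : ∑ i, ((xb - a) * (b - xb) + ((b - xb) - (xb - a)) * (x i - xb))^2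
      = n * ((xb - a) * (b - xb))^2 + ((b - xb) - (xb - a))^2 * (n * s^2) := by
    have he : ∀ i : Fin n, ((xb - a) * (b - xb) + ((b - xb) - (xb - a)) * (x i - xb))^2
        = ((xb - a) * (b - xb))^2 + (2 * ((xb - a) * (b - xb)) * ((b - xb) - (xb - a))) * (x i - xb)
          + ((b - xb) - (xb - a))^2 * (x i - xb)^2 := fun i => by ring
    rw [Finset.sum_congr rfl (fun i _ => he i), Finset.sum_add_distrib, Finset.sum_add_distrib,
      show (∑ i, (2 * ((xb - a) * (b - xb)) * ((b - xb) - (xb - a))) * (x i - xb))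
          = (2 * ((xb - a) * (b - xb)) * ((b - xb) - (xb - a))) * ∑ i, (x i - xb)
        from (Finset.mul_sum _ _ _).symm,
      show (∑ i, ((b - xb) - (xb - a))^2 * (x i - xb)^2)
          = ((b - xb) - (xb - a))^2 * ∑ i, (x i - xb)^2
        from (Finset.mul_sum _ _ _).symm, hsum0, hS2, mul_zero, add_zero, Finset.sum_const,
      Finset.card_univ, Fintype.card_fin, nsmul_eq_mul]
  have hm4 : 3 * (s^2)^2 ≤ ((xb - a) * (b - xb))^2 + ((b - xb) - (xb - a))^2 * s^2 := by
    have h := Finset.sum_le_sum (s := Finset.univ) (fun i _ => hpt4 i)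
    rw [hsum2] at h
    have h2 : (∑ i, (x i - xb)^4) / n ≤ ((xb - a) * (b - xb))^2 + ((b - xb) - (xb - a))^2 * s^2 := by
      rw [div_le_iff₀ hnr]
      nlinarith [h]
    linarith [hkurt]
  -- key: 6 t² ≤ αβ (b-a)²
  have hkey : 6 * (s^2)^2 ≤ (xb - a) * (b - xb) * (b - a)^2 := by
    have hq : (0:ℝ) ≤ (xb - a)^2 + (b - xb)^2 + (xb - a) * (b - xb) := by positivity
    have h1 := mul_le_mul_of_nonneg_left ht_le ht0
    have h2 := mul_le_mul_of_nonneg_left ht_le hq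
    linarith [hm4, h1, h2]
  have h6 : (0:ℝ) ≤ (xb - a) * (b - xb) / 6 := by positivity
  have hsq : Real.sqrt ((xb - a) * (b - xb) / 6) ^ 2 = (xb - a) * (b - xb) / 6 :=
    Real.sq_sqrt h6
  have hsn : 0 ≤ Real.sqrt ((xb - a) * (b - xb) / 6) := Real.sqrt_nonneg _
  have hr0 : 0 ≤ (b - a) * Real.sqrt ((xb - a) * (b - xb) / 6) := mul_nonneg hba hsn
  constructor
  · have hrr : (s^2)^2 ≤ ((b - a) * Real.sqrt ((xb - a) * (b - xb) / 6))^2 := by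
      rw [mul_pow, hsq]
      linarith [hkey]
    have h := Real.sqrt_le_sqrt hrr
    rwa [Real.sqrt_sq ht0, Real.sqrt_sq hr0] at h
  · have hs6 : (0:ℝ) < Real.sqrt 6 := Real.sqrt_pos.mpr (by norm_num)
    have h6s : Real.sqrt 6 ^ 2 = 6 := Real.sq_sqrt (by norm_num)
    have hrhs0 : 0 ≤ (b - a) / (2 * Real.sqrt 6) := div_nonneg hba (by positivity)
    have h2 : Real.sqrt ((xb - a) * (b - xb) / 6) ≤ (b - a) / (2 * Real.sqrt 6) := by
      rw [show (b - a) / (2 * Real.sqrt 6)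
          = Real.sqrt (((b - a) / (2 * Real.sqrt 6))^2) from (Real.sqrt_sq hrhs0).symm]
      apply Real.sqrt_le_sqrt
      rw [div_pow]
      have h24 : (2 * Real.sqrt 6)^2 = 24 := by rw [mul_pow, h6s]; norm_num
      rw [h24]
      nlinarith [sq_nonneg ((xb - a) - (b - xb))]
    calc (b - a) * Real.sqrt ((xb - a) * (b - xb) / 6)
        ≤ (b - a) * ((b - a) / (2 * Real.sqrt 6)) := by
          exact mul_le_mul_of_nonneg_left h2 hba
      _ = (b - a)^2 / (2 * Real.sqrt 6) := by ring
end

section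
/- Let U be an n×n complex unitary matrix (n ≥ 2) with tr U = 0, and let μ₁,…,μₙ ∈ ℂ be the eigenvalues of U, i.e., the roots of its characteristic polynomial counted with multiplicity. Then (i) the closed unit disk centered at 0 is the smallest closed disk containing all the eigenvalues: |μᵢ| = 1 for all i and for every complex number c there exists an index i with |μᵢ − c| ≥ 1; and (ii) there exist indices i, j with |μᵢ − μⱼ| ≥ √3, i.e., the spread max_{i,j}|μᵢ − μⱼ| of U is at least √3. -/
open Polynomial

lemma aux_cos_two_pi_div_three : Real.cos (2 * Real.pi / 3) = -(1 / 2) := by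
  have h : (2 * Real.pi / 3 : ℝ) = Real.pi - Real.pi / 3 := by ring
  rw [h, Real.cos_pi_sub, Real.cos_pi_div_three]

/-- Squared chord length between two points on the unit circle. -/
lemma aux_chord_sq (a b : ℝ) :
    Complex.normSq (Complex.exp (a * Complex.I) - Complex.exp (b * Complex.I))
      = 2 - 2 * Real.cos (a - b) := by
  rw [Complex.normSq_sub]
  have h1 : Complex.normSq (Complex.exp ((a : ℂ) * Complex.I)) = 1 := by
    rw [← Complex.sq_norm, Complex.norm_exp_ofReal_mul_I]; norm_num
  have h2 : Complex.normSq (Complex.exp ((b : ℂ) * Complex.I)) = 1 := by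
    rw [← Complex.sq_norm, Complex.norm_exp_ofReal_mul_I]; norm_num
  have h3 : (starRingEnd ℂ) (Complex.exp ((b : ℂ) * Complex.I))
      = Complex.exp (-((b : ℂ) * Complex.I)) := by
    rw [← Complex.exp_conj]
    congr 1
    simp [Complex.conj_I]
  have h4 : Complex.exp ((a : ℂ) * Complex.I) * Complex.exp (-((b : ℂ) * Complex.I))
      = Complex.exp (((a - b : ℝ) : ℂ) * Complex.I) := by
    rw [← Complex.exp_add]
    congr 1
    push_cast
    ring
  rw [h1, h2, h3, h4, Complex.exp_ofReal_mul_I_re]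
  ring

/-- A point on the circle within chordal distance `√3` of `1` has angle `< 2π/3`. -/
lemma aux_angle_bound {x : ℝ} (hx : -Real.pi < x) (hx' : x ≤ Real.pi)
    (h : -(1 / 2) < Real.cos x) : |x| < 2 * Real.pi / 3 := by
  by_contra hcon
  push_neg at hcon
  have h1 : Real.cos |x| ≤ Real.cos (2 * Real.pi / 3) :=
    Real.cos_le_cos_of_nonneg_of_le_pi (by positivity)
      (abs_le.mpr ⟨le_of_lt hx, hx'⟩) hcon
  rw [Real.cos_abs, aux_cos_two_pi_div_three] at h1
  linarith

open scoped Matrix.Norms.L2Operator in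
/-- Every root of the characteristic polynomial of a unitary matrix has modulus one. -/
lemma aux_abs_one {n : ℕ} (U : Matrix (Fin n) (Fin n) ℂ)
    (hU : U ∈ Matrix.unitaryGroup (Fin n) ℂ) (z : ℂ)
    (hz : (Matrix.charpoly U).eval z = 0) : ‖z‖ = 1 := by
  have hdet : (Matrix.scalar (Fin n) z - U).det = 0 := by
    have h := eval_det (Matrix.charmatrix U) z
    rw [Matrix.matPolyEquiv_charmatrix] at h
    rw [Matrix.charpoly] at hz
    rw [hz] at h
    simpa using h.symm
  have hmem : z ∈ spectrum ℂ U := by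
    rw [spectrum.mem_iff]
    intro h
    have halg : (algebraMap ℂ (Matrix (Fin n) (Fin n) ℂ)) z
        = Matrix.scalar (Fin n) z := by
      rw [Matrix.algebraMap_eq_diagonal]
      rfl
    have h2 : IsUnit (Matrix.scalar (Fin n) z - U).det := by
      apply (Matrix.isUnit_iff_isUnit_det _).mp
      rw [← halg]
      exact h
    rw [hdet] at h2
    exact (not_isUnit_zero h2).elim
  have := spectrum.subset_circle_of_unitary hU hmem
  simpa using mem_sphere_zero_iff_norm.mp this

/-- If `U` is unitary with zero trace and eigenvalues `μ₁, …, μₙ` (the roots of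
its characteristic polynomial with multiplicity), then the closed unit disk is
the smallest closed disk containing the eigenvalues, and the spread of `U` is
at least `√3`. -/
theorem stmt_14 (n : ℕ) (hn : 2 ≤ n) (U : Matrix (Fin n) (Fin n) ℂ)
    (hU : U ∈ Matrix.unitaryGroup (Fin n) ℂ)
    (htr : Matrix.trace U = 0)
    (μ : Fin n → ℂ)
    (hchar : Matrix.charpoly U = ∏ i, (X - C (μ i))) :
    (∀ i, ‖μ i‖ = 1) ∧
      (∀ c : ℂ, ∃ i, 1 ≤ ‖μ i - c‖) ∧
      (∃ i j, Real.sqrt 3 ≤ ‖μ i - μ j‖) := by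
  haveI : NeZero n := ⟨by omega⟩
  have i0 : Fin n := ⟨0, by omega⟩
  -- all eigenvalues have modulus one
  have habs : ∀ i, ‖μ i‖ = 1 := by
    intro i
    apply aux_abs_one U hU
    rw [hchar]
    rw [Polynomial.eval_prod]
    apply Finset.prod_eq_zero (Finset.mem_univ i)
    simp
  -- eigenvalues sum to zero
  have hs : ∑ i, μ i = 0 := by
    have h1 := Matrix.trace_eq_neg_charpoly_coeff U
    rw [hchar, htr] at h1
    have h2 := Polynomial.prod_X_sub_C_coeff_card_pred Finset.univ μ
      (by simp; omega)
    rw [Finset.card_univ, Fintype.card_fin] at h2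
    rw [Fintype.card_fin, h2] at h1
    linear_combination -h1
  refine ⟨habs, ?_, ?_⟩
  · -- the unit disk is the smallest disk
    intro c
    by_contra hc
    push_neg at hc
    have key : ∀ i ∈ Finset.univ, Complex.normSq c / 2
        < (μ i * (starRingEnd ℂ) c).re := by
      intro i _
      have h1 : Complex.normSq (μ i - c) < 1 := by
        have h2 := hc i
        have h3 : ‖μ i - c‖ ^ 2 < 1 ^ 2 := by
          apply pow_lt_pow_left₀ h2 (norm_nonneg _) (by norm_num)
        rwa [Complex.sq_norm, one_pow] at h3
      rw [Complex.normSq_sub] at h1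
      have h2 : Complex.normSq (μ i) = 1 := by
        rw [← Complex.sq_norm, habs i]; norm_num
      linarith
    have hlt := Finset.sum_lt_sum_of_nonempty Finset.univ_nonempty key
    have hrhs : ∑ i, (μ i * (starRingEnd ℂ) c).re = 0 := by
      rw [← Complex.re_sum, ← Finset.sum_mul, hs, zero_mul, Complex.zero_re]
    have hlhs : (0 : ℝ) ≤ ∑ _i : Fin n, Complex.normSq c / 2 := by
      apply Finset.sum_nonneg
      intro i _
      exact div_nonneg (Complex.normSq_nonneg c) (by norm_num)
    linarith
  · -- the spread is at least √3
    by_contra hc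
    push_neg at hc
    have hμ0 : μ i0 ≠ 0 := by
      intro h
      have := habs i0
      rw [h] at this
      simp at this
    set ν : Fin n → ℂ := fun i => μ i / μ i0 with hν
    have hνabs : ∀ i, ‖ν i‖ = 1 := by
      intro i
      simp [hν, habs]
    have hνsum : ∑ i, ν i = 0 := by
      simp only [hν]
      rw [← Finset.sum_div, hs, zero_div]
    have hνdiff : ∀ i j, ‖ν i - ν j‖ < Real.sqrt 3 := by
      intro i j
      have h1 : ν i - ν j = (μ i - μ j) / μ i0 := by
        simp only [hν]
        field_simp
      rw [h1, norm_div, habs i0, div_one]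
      exact hc i j
    set θ : Fin n → ℝ := fun i => (ν i).arg with hθ
    have hexp : ∀ i, ν i = Complex.exp ((θ i : ℂ) * Complex.I) := by
      intro i
      conv_lhs => rw [← Complex.norm_mul_exp_arg_mul_I (ν i)]
      rw [hνabs i]
      simp [hθ]
    have hcos : ∀ i j, -(1 / 2 : ℝ) < Real.cos (θ i - θ j) := by
      intro i j
      have h1 : Complex.normSq (ν i - ν j) < 3 := by
        have h2 := hνdiff i j
        have h3 : ‖ν i - ν j‖ ^ 2 < Real.sqrt 3 ^ 2 := by
          apply pow_lt_pow_left₀ h2 (norm_nonneg _) (by norm_num)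
        rwa [Complex.sq_norm, Real.sq_sqrt (by norm_num : (3:ℝ) ≥ 0)] at h3
      rw [hexp i, hexp j, aux_chord_sq] at h1
      linarith
    have hθ0 : θ i0 = 0 := by
      have : ν i0 = 1 := by simp [hν, div_self hμ0]
      simp [hθ, this]
    have hθbound : ∀ i, |θ i| < 2 * Real.pi / 3 := by
      intro i
      apply aux_angle_bound (Complex.neg_pi_lt_arg _) (Complex.arg_le_pi _)
      have := hcos i i0
      rwa [hθ0, sub_zero] at this
    obtain ⟨ia, -, hia⟩ := Finset.exists_min_image Finset.univ θ
      ⟨i0, Finset.mem_univ i0⟩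
    obtain ⟨ib, -, hib⟩ := Finset.exists_max_image Finset.univ θ
      ⟨i0, Finset.mem_univ i0⟩
    have hab : ∀ i, θ ia ≤ θ i ∧ θ i ≤ θ ib := fun i =>
      ⟨hia i (Finset.mem_univ i), hib i (Finset.mem_univ i)⟩
    have hba : θ ib - θ ia < 2 * Real.pi / 3 := by
      by_contra h
      push_neg at h
      have h1 := hcos ib ia
      have h2 : θ ib - θ ia < 4 * Real.pi / 3 := by
        have ha := hθbound ia
        have hb := hθbound ib
        rw [abs_lt] at ha hb
        obtain ⟨ha1, ha2⟩ := ha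
        obtain ⟨hb1, hb2⟩ := hb
        linarith
      rcases le_or_gt (θ ib - θ ia) Real.pi with hle | hlt
      · have h3 := Real.cos_le_cos_of_nonneg_of_le_pi
          (x := 2 * Real.pi / 3) (by positivity) hle h
        rw [aux_cos_two_pi_div_three] at h3
        linarith
      · have h3 := Real.cos_le_cos_of_nonneg_of_le_pi
          (x := 2 * Real.pi / 3) (y := 2 * Real.pi - (θ ib - θ ia))
          (by positivity) (by linarith) (by linarith)
        rw [aux_cos_two_pi_div_three, Real.cos_two_pi_sub] at h3
        linarith
    have haleb : θ ia ≤ θ ib := (hab i0).1.trans (hab i0).2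
    set m : ℝ := (θ ia + θ ib) / 2 with hm
    have hkey : ∀ i, (1 : ℝ) / 2 < Real.cos (θ i - m) := by
      intro i
      have h1 : |θ i - m| ≤ (θ ib - θ ia) / 2 := by
        obtain ⟨h2, h3⟩ := hab i
        rw [abs_le]
        constructor <;> [skip; skip] <;> simp only [hm] <;> linarith
      have h4 : Real.cos ((θ ib - θ ia) / 2) ≤ Real.cos |θ i - m| := by
        apply Real.cos_le_cos_of_nonneg_of_le_pi (abs_nonneg _) _ h1
        have := Real.pi_pos
        linarith
      have h5 : Real.cos (Real.pi / 3) < Real.cos ((θ ib - θ ia) / 2) := by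
        apply Real.strictAntiOn_cos
        · constructor
          · linarith
          · have := Real.pi_pos; linarith
        · constructor
          · linarith
          · have := Real.pi_pos; linarith
        · linarith
      rw [Real.cos_pi_div_three] at h5
      rw [← Real.cos_abs (θ i - m)]
      linarith
    have hre : ∀ i, (Complex.exp (-((m : ℂ) * Complex.I)) * ν i).re
        = Real.cos (θ i - m) := by
      intro i
      rw [hexp i, ← Complex.exp_add]
      have h1 : -((m : ℂ) * Complex.I) + (θ i : ℂ) * Complex.I
          = ((θ i - m : ℝ) : ℂ) * Complex.I := by
        push_cast
        ring
      rw [h1, Complex.exp_ofReal_mul_I_re]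
    have hsum0 : ∑ i, (Complex.exp (-((m : ℂ) * Complex.I)) * ν i).re = 0 := by
      rw [← Complex.re_sum, ← Finset.mul_sum, hνsum, mul_zero, Complex.zero_re]
    have hgt := Finset.sum_lt_sum_of_nonempty (Finset.univ_nonempty (α := Fin n))
      (f := fun _ => (1 : ℝ) / 2)
      (g := fun i => (Complex.exp (-((m : ℂ) * Complex.I)) * ν i).re)
      (fun i _ => by rw [hre i]; exact hkey i)
    rw [hsum0] at hgt
    have hpos : (0 : ℝ) < ∑ _i : Fin n, (1 : ℝ) / 2 := by
      rw [Finset.sum_const, Finset.card_univ, Fintype.card_fin]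
      have : (0:ℝ) < n := by positivity
      simp only [nsmul_eq_mul]
      positivity
    linarith
end

section
/- Let A be an n×n complex matrix (n ≥ 2) whose eigenvalues λ₁,…,λₙ are all real and nonnegative, and suppose 0 < tr A and (tr A)² ≤ n·tr(B²), where B = A − (tr A/n)·I. Then Spd(A) ≥ tr(A²)/tr(A). -/
open Polynomial

/-- If the eigenvalues of `A` are real and nonnegative, `tr A > 0` and
`(tr A)² ≤ n·tr B²` with `B = A - (tr A/n)I`, then `Spd(A) ≥ tr A²/tr A`. -/
theorem stmt_15 (n : ℕ) (hn : 2 ≤ n) (A : Matrix (Fin n) (Fin n) ℂ)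
    (lam : Fin n → ℝ)
    (hchar : Matrix.charpoly A = ∏ i, (X - C ((lam i : ℂ))))
    (hpos : ∀ i, 0 ≤ lam i)
    (T trB2 : ℝ) (hT : T = ∑ i, lam i)
    (htrB2 : trB2 = ∑ i, (lam i - T / n) ^ 2)
    (hT0 : 0 < T) (hcond : T ^ 2 ≤ (n : ℝ) * trB2)
    (lmin lmax : ℝ)
    (hmin : IsLeast (Set.range lam) lmin)
    (hmax : IsGreatest (Set.range lam) lmax) :
    (∑ i, (lam i) ^ 2) / T ≤ lmax - lmin := by
  obtain ⟨i0, hi0⟩ := hmin.1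
  have hminle : ∀ i, lmin ≤ lam i := fun i => hmin.2 ⟨i, rfl⟩
  have hmaxge : ∀ i, lam i ≤ lmax := fun i => hmax.2 ⟨i, rfl⟩
  have hlmin0 : 0 ≤ lmin := hi0 ▸ hpos i0
  have hn0 : (0:ℝ) < n := by exact_mod_cast Nat.lt_of_lt_of_le (by norm_num) hn
  set S2 := ∑ i, (lam i) ^ 2 with hS2
  have h1 : 0 ≤ ∑ i, (lam i - lmin) * (lmax - lam i) :=
    Finset.sum_nonneg fun i _ =>
      mul_nonneg (by linarith [hminle i]) (by linarith [hmaxge i])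
  have h2 : 0 ≤ ∑ i, lam i * (lmax - lam i) :=
    Finset.sum_nonneg fun i _ => mul_nonneg (hpos i) (by linarith [hmaxge i])
  have e1 : ∑ i, (lam i - lmin) * (lmax - lam i)
      = (lmax + lmin) * T - S2 - n * (lmin * lmax) := by
    have expand : ∀ i, (lam i - lmin) * (lmax - lam i)
        = (lmax + lmin) * lam i - (lam i) ^ 2 - lmin * lmax := fun i => by ring
    simp_rw [expand]
    rw [Finset.sum_sub_distrib, Finset.sum_sub_distrib, ← Finset.mul_sum,
      Finset.sum_const, Finset.card_univ, Fintype.card_fin, ← hT, nsmul_eq_mul]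
  have e2 : ∑ i, lam i * (lmax - lam i) = lmax * T - S2 := by
    have expand : ∀ i, lam i * (lmax - lam i) = lmax * lam i - (lam i) ^ 2 :=
      fun i => by ring
    simp_rw [expand]
    rw [Finset.sum_sub_distrib, ← Finset.mul_sum, ← hT]
  have e3 : (n:ℝ) * trB2 = (n:ℝ) * S2 - T ^ 2 := by
    have expand : ∀ i, (lam i - T / n) ^ 2
        = (lam i) ^ 2 - 2 * (T / n) * lam i + (T / n) ^ 2 := fun i => by ring
    rw [htrB2]
    simp_rw [expand]
    rw [Finset.sum_add_distrib, Finset.sum_sub_distrib, ← Finset.mul_sum,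
      Finset.sum_const, Finset.card_univ, Fintype.card_fin, ← hT, nsmul_eq_mul]
    field_simp
    ring
  have hS2le : S2 ≤ lmax * T := by linarith [e2 ▸ h2]
  have h2T : 2 * T ≤ n * lmax := by
    have hst : 2 * T ^ 2 ≤ (n:ℝ) * (lmax * T) := by nlinarith
    nlinarith
  have key : S2 ≤ (lmax + lmin) * T - n * (lmin * lmax) := by linarith [e1 ▸ h1]
  have hprod : 2 * T * lmin ≤ n * (lmin * lmax) := by nlinarith
  rw [div_le_iff₀ hT0]
  nlinarith
end

section
/- Let A be an n×n complex matrix (n ≥ 3) whose eigenvalues λ₁,…,λₙ are all real and nonnegative, and suppose 0 < tr A and (tr A)² ≤ n·tr(B²), where B = A − (tr A/n)·I. Then Spd(A)² ≤ 2·tr(B²) − (n·tr(B²) − (tr A)²)² / (n(n−2)(tr A)²); equivalently Spd(A) ≤ (1/tr A)·√(2·tr(B²)·(tr A)² − (n·tr(B²) − (tr A)²)²/(n(n−2))). -/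
open Polynomial Finset

/-- If the eigenvalues of `A` are real and nonnegative, `tr A > 0`,
`(tr A)² ≤ n·tr B²` with `B = A - (tr A/n)I` and `n ≥ 3`, then
`Spd(A)² ≤ 2 tr B² - (n tr B² - (tr A)²)²/(n(n-2)(tr A)²)`. -/
theorem stmt_16 (n : ℕ) (hn : 3 ≤ n) (A : Matrix (Fin n) (Fin n) ℂ)
    (lam : Fin n → ℝ)
    (hchar : Matrix.charpoly A = ∏ i, (X - C ((lam i : ℂ))))
    (hpos : ∀ i, 0 ≤ lam i)
    (T trB2 : ℝ) (hT : T = ∑ i, lam i)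
    (htrB2 : trB2 = ∑ i, (lam i - T / n) ^ 2)
    (hT0 : 0 < T) (hcond : T ^ 2 ≤ (n : ℝ) * trB2)
    (lmin lmax : ℝ)
    (hmin : IsLeast (Set.range lam) lmin)
    (hmax : IsGreatest (Set.range lam) lmax) :
    (lmax - lmin) ^ 2 ≤
      2 * trB2 - ((n : ℝ) * trB2 - T ^ 2) ^ 2 / ((n : ℝ) * ((n : ℝ) - 2) * T ^ 2) := by
  have hnR : (3:ℝ) ≤ (n:ℝ) := by exact_mod_cast hn
  have hnne : (n:ℝ) ≠ 0 := by positivity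
  obtain ⟨⟨i0, hi0⟩, hlb⟩ := hmin
  obtain ⟨⟨i1, hi1⟩, hub⟩ := hmax
  have hlow : ∀ i, lmin ≤ lam i := fun i => hlb ⟨i, rfl⟩
  have hup : ∀ i, lam i ≤ lmax := fun i => hub ⟨i, rfl⟩
  set S2 := ∑ i, lam i ^ 2 with hS2
  have expand : ∀ c : ℝ, ∑ i, (lam i - c) ^ 2 = S2 - 2*c*T + (n:ℝ)*c^2 := by
    intro c
    have : ∀ i ∈ Finset.univ, (lam i - c)^2 = lam i ^2 - 2*c*lam i + c^2 := fun i _ => by ring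
    rw [Finset.sum_congr rfl this, Finset.sum_add_distrib, Finset.sum_sub_distrib,
      ← Finset.mul_sum, Finset.sum_const, Finset.card_univ, Fintype.card_fin, ← hT, hS2,
      nsmul_eq_mul]
  have htr2 : (n:ℝ) * trB2 = (n:ℝ) * S2 - T ^ 2 := by
    rw [htrB2, expand (T / n)]
    field_simp
    ring
  -- degenerate case
  rcases eq_or_lt_of_le (le_trans (hlow i1) (le_of_eq hi1)) with heq | hlt
  · exfalso
    have hall : ∀ i, lam i = lmax := fun i => le_antisymm (hup i) (heq ▸ hlow i)
    have hTv : T = (n:ℝ) * lmax := by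
      rw [hT]; simp [hall, Finset.sum_const, Finset.card_univ, mul_comm]
    have hz : trB2 = 0 := by
      rw [htrB2]
      apply Finset.sum_eq_zero
      intro i _
      rw [hall i, hTv]
      field_simp
      simp
    rw [hz] at hcond
    nlinarith [pow_pos hT0 2]
  -- main case
  have hne : i0 ≠ i1 := by
    intro h; rw [h, hi1] at hi0; linarith
  have hq0 : 0 ≤ lmin := hi0 ▸ hpos i0
  -- fact 1
  have f1 : S2 + (n:ℝ) * (lmax * lmin) ≤ (lmax + lmin) * T := by
    have hnn : 0 ≤ ∑ i, (lmax - lam i) * (lam i - lmin) :=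
      Finset.sum_nonneg fun i _ =>
        mul_nonneg (sub_nonneg.2 (hup i)) (sub_nonneg.2 (hlow i))
    have e : ∀ i ∈ Finset.univ, (lmax - lam i) * (lam i - lmin)
        = (lmax + lmin) * lam i - lmax * lmin - lam i ^ 2 := fun i _ => by ring
    rw [Finset.sum_congr rfl e, Finset.sum_sub_distrib, Finset.sum_sub_distrib,
      ← Finset.mul_sum, Finset.sum_const, Finset.card_univ, Fintype.card_fin, ← hT, ← hS2,
      nsmul_eq_mul] at hnn
    linarith
  -- fact 2 : Cauchy-Schwarz on the other n-2 entries
  set s : Finset (Fin n) := Finset.univ \ {i0, i1} with hs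
  have hsub : ({i0, i1} : Finset (Fin n)) ⊆ Finset.univ := Finset.subset_univ _
  have hcard : (s.card : ℝ) = (n:ℝ) - 2 := by
    rw [hs, Finset.card_sdiff_of_subset hsub, Finset.card_pair hne, Finset.card_univ, Fintype.card_fin,
      Nat.cast_sub (by omega)]
    norm_num
  have hsum : ∑ i ∈ s, lam i = T - lmax - lmin := by
    have h1 := Finset.sum_sdiff (f := lam) hsub
    rw [Finset.sum_pair hne, hi0, hi1] at h1
    rw [hT]; linarith [h1]
  have hsumsq : ∑ i ∈ s, lam i ^ 2 = S2 - lmax^2 - lmin^2 := by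
    have h1 := Finset.sum_sdiff (f := fun i => lam i ^ 2) hsub
    rw [Finset.sum_pair hne, hi0, hi1] at h1
    rw [hS2]; linarith [h1]
  have f2 : (T - lmax - lmin)^2 ≤ ((n:ℝ) - 2) * (S2 - lmax^2 - lmin^2) := by
    have := sq_sum_le_card_mul_sum_sq (s := s) (f := lam)
    rw [hsum, hsumsq, hcard] at this
    exact this
  -- algebra
  have h1 : S2 ≤ (lmax + lmin) * T := by nlinarith [mul_nonneg (le_trans hq0 (le_of_lt hlt)) hq0]
  have hA : 0 ≤ (n:ℝ)*S2 - 2*T^2 := by linarith [htr2, hcond]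
  have hB : (n:ℝ)*S2 - 2*T^2 ≤ (n:ℝ)*((lmax+lmin)*T) - 2*T^2 := by nlinarith [h1]
  have hsq : ((n:ℝ)*S2 - 2*T^2)^2 ≤ ((n:ℝ)*((lmax+lmin)*T) - 2*T^2)^2 := by
    exact pow_le_pow_left₀ hA hB 2
  have h2m : (n:ℝ)*T^2 * ((T - lmax - lmin)^2)
      ≤ (n:ℝ)*T^2 * (((n:ℝ) - 2) * (S2 - lmax^2 - lmin^2)) := by
    apply mul_le_mul_of_nonneg_left f2 (by positivity)
  have key2 : ((n:ℝ)*S2 - 2*T^2)^2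
      ≤ (2*((n:ℝ)*S2 - T^2) - (n:ℝ)*(lmax - lmin)^2) * ((n:ℝ) - 2) * T^2 := by
    nlinarith [h2m, hsq]
  have hkey : ((n:ℝ)*trB2 - T^2)^2
      ≤ (2*trB2 - (lmax - lmin)^2) * ((n:ℝ)*((n:ℝ) - 2)*T^2) := by
    have e1 : (n:ℝ)*trB2 - T^2 = (n:ℝ)*S2 - 2*T^2 := by linarith [htr2]
    rw [e1]
    calc ((n:ℝ)*S2 - 2*T^2)^2
        ≤ (2*((n:ℝ)*S2 - T^2) - (n:ℝ)*(lmax - lmin)^2) * ((n:ℝ) - 2) * T^2 := key2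
      _ = (2*((n:ℝ)*trB2) - (n:ℝ)*(lmax - lmin)^2) * ((n:ℝ) - 2) * T^2 := by rw [htr2]
      _ = (2*trB2 - (lmax - lmin)^2) * ((n:ℝ)*((n:ℝ) - 2)*T^2) := by ring
  have hD : 0 < (n:ℝ)*((n:ℝ) - 2)*T^2 := by
    apply mul_pos (mul_pos (by linarith) (by linarith)) (pow_pos hT0 2)
  have := (div_le_iff₀ hD).mpr hkey
  linarith
end

section
/- Let f(x) = xⁿ + a₁xⁿ⁻¹ + a₂xⁿ⁻² + … + aₙ (n ≥ 3) be a monic polynomial with real coefficients whose n roots x₁,…,xₙ (counted with multiplicity) are all real and nonnegative, and suppose a₁ < 0 (i.e., at least one root is positive) and 2n·a₂ ≤ (n−2)·a₁². Then the span Dₙ = maxᵢ xᵢ − minᵢ xᵢ of f satisfies Dₙ ≥ (2a₂ − a₁²)/a₁ and Dₙ² ≤ (2/n)·((n−1)a₁² − 2n·a₂) − (1/(n(n−2)))·((2n·a₂ − (n−2)a₁²)/a₁)². -/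
open Polynomial Finset

set_option maxHeartbeats 1000000

lemma coeff_card_sub_two {ι : Type*} (s : Finset ι) (x : ι → ℝ) (h : 2 ≤ s.card) :
    (∏ i ∈ s, (X - C (x i))).coeff (s.card - 2)
      = ((∑ i ∈ s, x i) ^ 2 - ∑ i ∈ s, (x i) ^ 2) / 2 := by
  induction s using Finset.cons_induction with
  | empty => simp at h
  | cons a s ha IH =>
    rw [Finset.card_cons] at h ⊢
    rcases Nat.lt_or_ge s.card 2 with hlt | hge
    · -- s.card = 1
      have hcard : s.card = 1 := by omega
      obtain ⟨b, rfl⟩ := Finset.card_eq_one.mp hcard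
      rw [Finset.prod_cons, Finset.prod_singleton]
      simp only [hcard]
      rw [show (1 : ℕ) + 1 - 2 = 0 from rfl, Polynomial.mul_coeff_zero]
      simp [Finset.sum_cons]
      ring
    · obtain ⟨k, hk⟩ : ∃ k, s.card = k + 2 := ⟨s.card - 2, by omega⟩
      have hP1 : (∏ i ∈ s, (X - C (x i))).coeff (s.card - 1) = -∑ i ∈ s, x i :=
        Polynomial.prod_X_sub_C_coeff_card_pred s x (by omega)
      have hP2 := IH hge
      rw [Finset.prod_cons, sub_mul]
      rw [hk] at hP1 hP2 ⊢
      have e1 : k + 2 + 1 - 2 = k + 1 := rfl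
      have e2 : k + 2 - 1 = k + 1 := rfl
      have e3 : k + 2 - 2 = k := rfl
      rw [e2] at hP1
      rw [e3] at hP2
      rw [e1, Polynomial.coeff_sub, Polynomial.coeff_X_mul, Polynomial.coeff_C_mul,
        hP1, hP2, Finset.sum_cons, Finset.sum_cons]
      ring

/-- Bounds on the span of a monic polynomial with nonnegative real roots. -/
theorem stmt_19 (n : ℕ) (hn : 3 ≤ n) (f : Polynomial ℝ) (x : Fin n → ℝ)
    (hroots : f = ∏ i, (X - C (x i)))
    (hpos : ∀ i, 0 ≤ x i)
    (a₁ a₂ : ℝ) (ha₁ : a₁ = f.coeff (n - 1)) (ha₂ : a₂ = f.coeff (n - 2))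
    (ha₁neg : a₁ < 0) (hcond : 2 * (n : ℝ) * a₂ ≤ ((n : ℝ) - 2) * a₁ ^ 2)
    (xmin xmax : ℝ)
    (hmin : IsLeast (Set.range x) xmin)
    (hmax : IsGreatest (Set.range x) xmax)
    (D : ℝ) (hD : D = xmax - xmin) :
    (2 * a₂ - a₁ ^ 2) / a₁ ≤ D ∧
      D ^ 2 ≤ (2 / (n : ℝ)) * (((n : ℝ) - 1) * a₁ ^ 2 - 2 * (n : ℝ) * a₂)
        - (1 / ((n : ℝ) * ((n : ℝ) - 2))) * ((2 * (n : ℝ) * a₂ - ((n : ℝ) - 2) * a₁ ^ 2) / a₁) ^ 2 := by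
  classical
  set c : ℝ := (n : ℝ) with hc
  have hc3 : (3 : ℝ) ≤ c := by rw [hc]; exact_mod_cast hn
  set S : ℝ := ∑ i, x i with hSdef
  set Q : ℝ := ∑ i, (x i) ^ 2 with hQdef
  set m : ℝ := xmin
  set M : ℝ := xmax
  -- basic root bounds
  have hge : ∀ i, m ≤ x i := fun i => hmin.2 ⟨i, rfl⟩
  have hle : ∀ i, x i ≤ M := fun i => hmax.2 ⟨i, rfl⟩
  have hm0 : 0 ≤ m := by
    obtain ⟨i, hi⟩ := hmin.1
    rw [← hi]; exact hpos i
  have hmM : m ≤ M := by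
    obtain ⟨i, hi⟩ := hmin.1
    rw [← hi]; exact hle i
  -- coefficients
  have hcardu : (Finset.univ : Finset (Fin n)).card = n := by simp
  have ha₁' : a₁ = -S := by
    rw [ha₁, hroots]
    have := Polynomial.prod_X_sub_C_coeff_card_pred (Finset.univ : Finset (Fin n)) x
      (by rw [hcardu]; omega)
    rw [hcardu] at this
    exact this
  have ha₂' : a₂ = (S ^ 2 - Q) / 2 := by
    rw [ha₂, hroots]
    have := coeff_card_sub_two (Finset.univ : Finset (Fin n)) x (by rw [hcardu]; omega)
    rw [hcardu] at this
    exact this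
  -- fact B
  have hB : Q ≤ (m + M) * S - c * (m * M) := by
    have h0 : 0 ≤ ∑ i, ((m + M) * x i - (x i) ^ 2 - m * M) :=
      Finset.sum_nonneg fun i _ => by nlinarith [hge i, hle i]
    rw [Finset.sum_sub_distrib, Finset.sum_sub_distrib, ← Finset.mul_sum,
      Finset.sum_const, hcardu, nsmul_eq_mul, ← hSdef, ← hQdef, ← hc] at h0
    linarith
  have hQM : Q ≤ M * S := by
    have h0 : ∀ i ∈ Finset.univ, (x i) ^ 2 ≤ M * x i := fun i _ => by
      nlinarith [hpos i, hle i]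
    have h1 := Finset.sum_le_sum h0
    rw [← Finset.mul_sum, ← hSdef, ← hQdef] at h1
    exact h1
  -- all roots equal case
  have halleq : M ≤ m → S = c * m ∧ Q = c * m ^ 2 := by
    intro h
    have hxall : ∀ i, x i = m := fun i => le_antisymm (le_trans (hle i) h) (hge i)
    constructor
    · rw [hSdef, Finset.sum_congr rfl (fun i _ => hxall i), Finset.sum_const, hcardu,
        nsmul_eq_mul, ← hc]
    · rw [hQdef, Finset.sum_congr rfl (fun i _ => by rw [hxall i]), Finset.sum_const, hcardu,
        nsmul_eq_mul, ← hc]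
  -- split sums at extremal indices
  obtain ⟨i₀, hi₀⟩ := hmin.1
  obtain ⟨j₀, hj₀⟩ := hmax.1
  have hsplits : ∀ (hij : j₀ ≠ i₀),
      (S - m - M) ^ 2 ≤ (c - 2) * (Q - m ^ 2 - M ^ 2) := by
    intro hij
    set T : Finset (Fin n) := (Finset.univ.erase i₀).erase j₀ with hT
    have hjmem : j₀ ∈ Finset.univ.erase i₀ := Finset.mem_erase.2 ⟨hij, Finset.mem_univ _⟩
    have hcardT : T.card = n - 2 := by
      rw [hT, Finset.card_erase_of_mem hjmem, Finset.card_erase_of_mem (Finset.mem_univ i₀),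
        hcardu]
      omega
    have hsplit : ∀ g : Fin n → ℝ, ∑ i, g i = g i₀ + g j₀ + ∑ i ∈ T, g i := by
      intro g
      rw [← Finset.add_sum_erase _ g (Finset.mem_univ i₀), ← Finset.add_sum_erase _ g hjmem, hT]
      ring
    have hsum : ∑ i ∈ T, x i = S - m - M := by
      have h := hsplit x; rw [← hSdef, hi₀, hj₀] at h; linarith
    have hsumsq : ∑ i ∈ T, (x i) ^ 2 = Q - m ^ 2 - M ^ 2 := by
      have h := hsplit (fun i => (x i) ^ 2); rw [← hQdef, hi₀, hj₀] at h; linarith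
    have hcs := sq_sum_le_card_mul_sum_sq (s := T) (f := x)
    rw [hsum, hsumsq, hcardT] at hcs
    have hcast : ((n - 2 : ℕ) : ℝ) = c - 2 := by
      rw [Nat.cast_sub (by omega), hc]; norm_num
    rw [hcast] at hcs
    exact hcs
  -- now forget definitions
  clear_value S Q c m M
  clear hSdef hQdef hc hroots ha₁ ha₂ hcardu hpos hmin hmax hge hle
  subst ha₁' ha₂' hD
  have hS : 0 < S := by linarith [neg_neg_iff_pos.mp ha₁neg]
  have hC : 2 * S ^ 2 ≤ c * Q := by nlinarith [hcond]
  have h2ScM : 2 * S ≤ c * M := by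
    nlinarith [mul_le_mul_of_nonneg_left hQM (by linarith : (0:ℝ) ≤ c), hC, hS]
  have part1 : Q ≤ (M - m) * S := by
    nlinarith [mul_nonneg hm0 (sub_nonneg.2 h2ScM), hB]
  have hmltM : m < M := by
    rcases lt_or_ge m M with h | h
    · exact h
    · exfalso
      obtain ⟨hSm, hQm⟩ := halleq h
      rw [hSm] at hS
      nlinarith [hC, hS]
  have hij : j₀ ≠ i₀ := by
    intro h; rw [h, hi₀] at hj₀; exact absurd hj₀ (ne_of_lt hmltM)
  have hA := hsplits hij
  have h2 : 0 ≤ c * Q - 2 * S ^ 2 := by linarith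
  have h3 : c * Q - 2 * S ^ 2 ≤ c * S * (m + M) - 2 * S ^ 2 := by
    have hQuS : Q ≤ (m + M) * S := by
      nlinarith [hB, mul_nonneg (mul_nonneg hm0 (le_trans hm0 hmM)) (by linarith : (0:ℝ) ≤ c)]
    nlinarith [hQuS, hS]
  have hI2 : (c * Q - 2 * S ^ 2) ^ 2 ≤ (c * S * (m + M) - 2 * S ^ 2) ^ 2 :=
    pow_le_pow_left₀ h2 h3 2
  have key : (M - m) ^ 2 * (c * (c - 2) * S ^ 2)
      ≤ 2 * Q * c * (c - 2) * S ^ 2 - 2 * (c - 2) * S ^ 4 - (c * Q - 2 * S ^ 2) ^ 2 := by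
    nlinarith [mul_le_mul_of_nonneg_left hA (show (0:ℝ) ≤ 2 * c * S ^ 2 from mul_nonneg (by linarith) (sq_nonneg S)), hI2]
  have hcS : (0:ℝ) < c * (c - 2) * S ^ 2 := mul_pos (mul_pos (by linarith) (by linarith)) (pow_pos hS 2)
  constructor
  · have heq : (2 * ((S ^ 2 - Q) / 2) - (-S) ^ 2) / (-S) = Q / S := by
      field_simp
      ring
    rw [heq, div_le_iff₀ hS]
    exact part1
  · have heq : (2 / c) * ((c - 1) * (-S) ^ 2 - 2 * c * ((S ^ 2 - Q) / 2))
        - (1 / (c * (c - 2))) * ((2 * c * ((S ^ 2 - Q) / 2) - (c - 2) * (-S) ^ 2) / (-S)) ^ 2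
        = (2 * Q * c * (c - 2) * S ^ 2 - 2 * (c - 2) * S ^ 4 - (c * Q - 2 * S ^ 2) ^ 2)
          / (c * (c - 2) * S ^ 2) := by
      have hc0 : c ≠ 0 := by linarith
      have hc2 : c - 2 ≠ 0 := by linarith
      have hS0 : S ≠ 0 := ne_of_gt hS
      field_simp
      ring
    rw [heq, le_div_iff₀ hcS]
    exact key
end
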